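/- arXiv:1012.0498 — 2 statements merged into one kernel-verified Lean document; each statement's English description precedes it below -/
import Mathlib

section
/- Let U be a tied incomplete ranking on {1,…,n} with consistent set S_U and ranked item set B_U with |B_U| = k. Let i ∉ B_U be unranked and let j ∈ B_U be ranked. Then the fraction of consistent permutations ranking i before j is #{π ∈ S_U : π(i) < π(j)} / |S_U| = (τ_U(j) + (φ_U(j) − 1)/2) / (k + 1). -/
/-- A tied incomplete ranking on `{1,…,n}`: a sequence `A 0, …, A (K-1)` of nonempty
pairwise disjoint subsets of `Fin n`; all items in `A s` are preferred to all items
in `A t` for `s < t`. -/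
structure TIR (n : ℕ) where
  K : ℕ
  A : Fin K → Finset (Fin n)
  nonempty : ∀ s, (A s).Nonempty
  disjoint : ∀ s t, s ≠ t → Disjoint (A s) (A t)

/-- The set of permutations consistent with a tied incomplete ranking `U`. -/
def TIR.consistent {n : ℕ} (U : TIR n) : Finset (Equiv.Perm (Fin n)) :=
  Finset.univ.filter (fun π => ∀ s t : Fin U.K, s < t →
    ∀ a ∈ U.A s, ∀ b ∈ U.A t, π a < π b)

/-- The set `B_U` of items ranked by `U`. -/
def TIR.ranked {n : ℕ} (U : TIR n) : Finset (Fin n) :=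
  Finset.univ.biUnion U.A

namespace TIRaux
open Finset Equiv

variable {n : ℕ} (U : TIR n)

lemma mem_consistent {π : Equiv.Perm (Fin n)} : π ∈ U.consistent ↔ ∀ s t : Fin U.K, s < t →
    ∀ a ∈ U.A s, ∀ b ∈ U.A t, π a < π b := by
  simp [TIR.consistent]

lemma mem_ranked {x : Fin n} : x ∈ U.ranked ↔ ∃ t, x ∈ U.A t := by
  simp [TIR.ranked]

lemma block_eq {x : Fin n} {s t : Fin U.K} (hs : x ∈ U.A s) (ht : x ∈ U.A t) : s = t := by
  by_contra h
  exact Finset.disjoint_left.mp (U.disjoint s t h) hs ht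

/-- There exists a consistent permutation. -/
lemma consistent_nonempty : U.consistent.Nonempty := by
  classical
  set w : Fin n → ℕ := fun x => if h : ∃ t, x ∈ U.A t then (h.choose : ℕ) else U.K with hw
  have hwval : ∀ (t : Fin U.K), ∀ x ∈ U.A t, w x = t := by
    intro t x hx
    have h : ∃ t, x ∈ U.A t := ⟨t, hx⟩
    have : h.choose = t := block_eq U h.choose_spec hx
    simp [hw, dif_pos h, this]
  refine ⟨(Tuple.sort w)⁻¹, (mem_consistent U).2 ?_⟩
  intro s t hst a ha b hb
  have hab : w a < w b := by
    rw [hwval s a ha, hwval t b hb]; exact_mod_cast hst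
  by_contra hle
  push_neg at hle
  have := Tuple.monotone_sort w hle
  simp only [Function.comp_apply, Equiv.Perm.inv_def, Equiv.apply_symm_apply] at this
  omega

lemma swap_mem_block {s : Fin U.K} {j b : Fin n} (hj : j ∈ U.A s) (hb : b ∈ U.A s)
    {t : Fin U.K} {x : Fin n} (hx : x ∈ U.A t) : Equiv.swap j b x ∈ U.A t := by
  rcases eq_or_ne x j with rfl | hxj
  · rw [Equiv.swap_apply_left]
    exact (block_eq U hj hx) ▸ hb
  rcases eq_or_ne x b with rfl | hxb
  · rw [Equiv.swap_apply_right]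
    exact (block_eq U hb hx) ▸ hj
  · rwa [Equiv.swap_apply_of_ne_of_ne hxj hxb]

lemma consistent_mul_swap {s : Fin U.K} {j b : Fin n} (hj : j ∈ U.A s) (hb : b ∈ U.A s)
    {π : Equiv.Perm (Fin n)} (hπ : π ∈ U.consistent) : π * Equiv.swap j b ∈ U.consistent := by
  rw [mem_consistent] at hπ ⊢
  intro s' t' hst a ha b' hb'
  simpa [Equiv.Perm.mul_apply] using
    hπ s' t' hst _ (swap_mem_block U hj hb ha) _ (swap_mem_block U hj hb hb')

lemma card_event_eq {i : Fin n} (hi : i ∉ U.ranked) {s : Fin U.K} {j b : Fin n}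
    (hj : j ∈ U.A s) (hb : b ∈ U.A s) :
    (U.consistent.filter (fun π => π i < π j)).card
      = (U.consistent.filter (fun π => π i < π b)).card := by
  have hij : i ≠ j := fun h => hi ((mem_ranked U).2 ⟨s, h ▸ hj⟩)
  have hib : i ≠ b := fun h => hi ((mem_ranked U).2 ⟨s, h ▸ hb⟩)
  have hσi : ∀ π : Equiv.Perm (Fin n), (π * Equiv.swap j b) i = π i := by
    intro π
    simp [Equiv.Perm.mul_apply, Equiv.swap_apply_of_ne_of_ne hij hib]
  have hinv : ∀ π : Equiv.Perm (Fin n), π * Equiv.swap j b * Equiv.swap j b = π := by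
    intro π; rw [mul_assoc, Equiv.swap_mul_self, mul_one]
  refine Finset.card_bij' (fun π _ => π * Equiv.swap j b) (fun π _ => π * Equiv.swap j b)
    ?_ ?_ (fun π _ => hinv π) (fun π _ => hinv π)
  · intro π hπ
    rw [Finset.mem_filter] at hπ ⊢
    refine ⟨consistent_mul_swap U hj hb hπ.1, ?_⟩
    rw [hσi π]
    simpa [Equiv.Perm.mul_apply] using hπ.2
  · intro π hπ
    rw [Finset.mem_filter] at hπ ⊢
    refine ⟨consistent_mul_swap U hj hb hπ.1, ?_⟩
    rw [hσi π]
    simpa [Equiv.Perm.mul_apply] using hπ.2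

lemma phi_mul_N1 {i : Fin n} (hi : i ∉ U.ranked) {s : Fin U.K} {j : Fin n} (hj : j ∈ U.A s) :
    (U.A s).card * (U.consistent.filter (fun π => π i < π j)).card
      = ∑ π ∈ U.consistent, ((U.A s).filter (fun b => π i < π b)).card := by
  classical
  have h1 : ∑ b ∈ U.A s, (U.consistent.filter (fun π => π i < π b)).card
      = (U.A s).card * (U.consistent.filter (fun π => π i < π j)).card := by
    rw [Finset.sum_congr rfl (fun b hb => (card_event_eq U hi hj hb).symm),
      Finset.sum_const, smul_eq_mul]
  rw [← h1]
  simp_rw [Finset.card_filter]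
  exact Finset.sum_comm


lemma q_eq {i : Fin n} {s : Fin U.K} {π : Equiv.Perm (Fin n)} (hπ : π ∈ U.consistent) :
    ((U.A s).filter (fun x => π x < π i)).card
      = min (U.A s).card
          ((U.ranked.filter (fun x => π x < π i)).card
            - ∑ t ∈ Finset.univ.filter (fun t : Fin U.K => t < s), (U.A t).card) := by
  classical
  rw [mem_consistent] at hπ
  set c : Fin U.K → ℕ := fun t => ((U.A t).filter (fun x => π x < π i)).card with hc
  have hkey : ((U.A s).filter (fun x => π x < π i)).card = c s := rfl
  have hρ : (U.ranked.filter (fun x => π x < π i)).card = ∑ t, c t := by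
    rw [TIR.ranked, Finset.filter_biUnion]
    exact Finset.card_biUnion
      (fun t _ t' _ h => Finset.disjoint_filter_filter (U.disjoint t t' h))
  have hnot : Finset.univ.filter (fun t : Fin U.K => ¬ t < s)
      = insert s (Finset.univ.filter (fun t : Fin U.K => s < t)) := by
    ext t
    simp only [Finset.mem_filter, Finset.mem_univ, true_and, Finset.mem_insert, not_lt]
    constructor
    · intro h
      rcases eq_or_lt_of_le h with h' | h'
      · exact Or.inl h'.symm
      · exact Or.inr h'
    · rintro (rfl | h)
      · exact le_refl _
      · exact le_of_lt h
  have hsplit : ∑ t, c t = (∑ t ∈ Finset.univ.filter (fun t : Fin U.K => t < s), c t)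
      + (c s + ∑ t ∈ Finset.univ.filter (fun t : Fin U.K => s < t), c t) := by
    rw [← Finset.sum_filter_add_sum_filter_not Finset.univ (fun t => t < s) c, hnot,
      Finset.sum_insert (by simp)]
  have hle : ∀ t, c t ≤ (U.A t).card := fun t => Finset.card_filter_le _ _
  have hfull : (∃ y ∈ U.A s, π y < π i) → ∀ t, t < s → c t = (U.A t).card := by
    rintro ⟨y, hy, hpy⟩ t ht
    simp only [hc]
    rw [Finset.filter_true_of_mem]
    intro a ha
    exact lt_trans (hπ t s ht a ha y hy) hpy
  have hzero : ∀ t, s < t → (∃ y ∈ U.A t, π y < π i) → c s = (U.A s).card := by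
    rintro t ht ⟨y, hy, hpy⟩
    simp only [hc]
    rw [Finset.filter_true_of_mem]
    intro a ha
    exact lt_trans (hπ s t ht a ha y hy) hpy
  have hcs : 0 < (U.A s).card := Finset.card_pos.2 (U.nonempty s)
  rw [hρ, hsplit]
  have hτle : (∑ t ∈ Finset.univ.filter (fun t : Fin U.K => t < s), c t)
      ≤ ∑ t ∈ Finset.univ.filter (fun t : Fin U.K => t < s), (U.A t).card :=
    Finset.sum_le_sum (fun t _ => hle t)
  rcases Nat.eq_zero_or_pos (c s) with h0 | hpos
  · have hz : ∀ t ∈ Finset.univ.filter (fun t : Fin U.K => s < t), c t = 0 := by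
      intro t ht
      rw [Finset.mem_filter] at ht
      by_contra hne
      obtain ⟨y, hy⟩ := Finset.card_ne_zero.1 hne
      rw [Finset.mem_filter] at hy
      have := hzero t ht.2 ⟨y, hy.1, hy.2⟩
      omega
    rw [Finset.sum_eq_zero hz]
    omega
  · have hex : ∃ y ∈ U.A s, π y < π i := by
      obtain ⟨y, hy⟩ := Finset.card_pos.1 hpos
      rw [Finset.mem_filter] at hy
      exact ⟨y, hy.1, hy.2⟩
    have h1 : (∑ t ∈ Finset.univ.filter (fun t : Fin U.K => t < s), c t)
        = ∑ t ∈ Finset.univ.filter (fun t : Fin U.K => t < s), (U.A t).card := by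
      refine Finset.sum_congr rfl (fun t ht => ?_)
      rw [Finset.mem_filter] at ht
      exact hfull hex t ht.2
    rcases eq_or_lt_of_le (hle s) with hfullS | hltS
    · rw [h1]
      omega
    · have hz : ∀ t ∈ Finset.univ.filter (fun t : Fin U.K => s < t), c t = 0 := by
        intro t ht
        rw [Finset.mem_filter] at ht
        by_contra hne
        obtain ⟨y, hy⟩ := Finset.card_ne_zero.1 hne
        rw [Finset.mem_filter] at hy
        have := hzero t ht.2 ⟨y, hy.1, hy.2⟩
        omega
      rw [Finset.sum_eq_zero hz, h1]
      omega


/-- Move `i` up one rank among ranked values. -/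
def stepf (U : TIR n) (i : Fin n) (π : Equiv.Perm (Fin n)) : Equiv.Perm (Fin n) :=
  if h : ((U.ranked.image π).filter (fun v => π i < v)).Nonempty
  then Equiv.swap (π i) (((U.ranked.image π).filter (fun v => π i < v)).min' h) * π
  else π

/-- Move `i` down one rank among ranked values. -/
def stepb (U : TIR n) (i : Fin n) (π : Equiv.Perm (Fin n)) : Equiv.Perm (Fin n) :=
  if h : ((U.ranked.image π).filter (fun v => v < π i)).Nonempty
  then Equiv.swap (π i) (((U.ranked.image π).filter (fun v => v < π i)).max' h) * π
  else π

lemma step_spec {i : Fin n} (hi : i ∉ U.ranked) {π : Equiv.Perm (Fin n)}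
    (hlt : (U.ranked.filter (fun x => π x < π i)).card < U.ranked.card) :
    (π ∈ U.consistent → stepf U i π ∈ U.consistent) ∧
    (U.ranked.filter (fun x => (stepf U i π) x < (stepf U i π) i)).card
      = (U.ranked.filter (fun x => π x < π i)).card + 1 ∧
    stepb U i (stepf U i π) = π := by
  classical
  have hxi : ∀ x, x ∈ U.ranked → x ≠ i := fun x hx h => hi (h ▸ hx)
  have hne : ((U.ranked.image π).filter (fun v => π i < v)).Nonempty := by
    have : ∃ x ∈ U.ranked, ¬ (π x < π i) := by
      by_contra h
      push_neg at h
      rw [Finset.filter_true_of_mem h] at hlt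
      omega
    obtain ⟨x, hx, hnx⟩ := this
    have : π i < π x :=
      lt_of_le_of_ne (not_lt.1 hnx) (fun h => (hxi x hx) (π.injective h.symm))
    exact ⟨π x, Finset.mem_filter.2 ⟨Finset.mem_image_of_mem π hx, this⟩⟩
  set v := ((U.ranked.image π).filter (fun v => π i < v)).min' hne with hv
  have hvmem := Finset.min'_mem _ hne
  rw [Finset.mem_filter] at hvmem
  obtain ⟨c, hcmem, hπc⟩ := Finset.mem_image.1 hvmem.1
  have hiv : π i < v := hvmem.2
  replace hπc : π c = v := hπc
  have hci : c ≠ i := by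
    intro h
    rw [h] at hπc
    rw [hπc] at hiv
    exact lt_irrefl _ hiv
  have hstep : stepf U i π = Equiv.swap (π i) v * π := by rw [stepf, dif_pos hne]
  set π' : Equiv.Perm (Fin n) := Equiv.swap (π i) v * π with hπ'def
  have hπ'i : π' i = v := by simp [hπ'def, Equiv.swap_apply_left]
  have hπ'c : π' c = π i := by simp [hπ'def, hπc, Equiv.swap_apply_right]
  have hπ'x : ∀ x, x ≠ i → x ≠ c → π' x = π x := by
    intro x h1 h2
    have e1 : π x ≠ π i := fun h => h1 (π.injective h)
    have e2 : π x ≠ v := fun h => h2 (π.injective (h.trans hπc.symm))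
    simp [hπ'def, Equiv.swap_apply_of_ne_of_ne e1 e2]
  have key : ∀ x ∈ U.ranked, x ≠ c → (π x < π i ↔ π x < v) := by
    intro x hx h2
    constructor
    · intro h; exact h.trans hiv
    · intro h
      by_contra hn
      have h1 : π i < π x :=
        lt_of_le_of_ne (not_lt.1 hn) (fun hh => (hxi x hx) (π.injective hh.symm))
      have : v ≤ π x := Finset.min'_le _ _
        (Finset.mem_filter.2 ⟨Finset.mem_image_of_mem π hx, h1⟩)
      omega
  have hfilter : U.ranked.filter (fun x => π' x < π' i)
      = insert c (U.ranked.filter (fun x => π x < π i)) := by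
    ext x
    rw [Finset.mem_insert, Finset.mem_filter, Finset.mem_filter, hπ'i]
    constructor
    · rintro ⟨hx, hlt'⟩
      rcases eq_or_ne x c with rfl | hxc
      · exact Or.inl rfl
      · rw [hπ'x x (hxi x hx) hxc] at hlt'
        exact Or.inr ⟨hx, (key x hx hxc).2 hlt'⟩
    · rintro (rfl | ⟨hx, hlt'⟩)
      · exact ⟨hcmem, by rw [hπ'c]; exact hiv⟩
      · have hxc : x ≠ c := fun h => by rw [h, hπc] at hlt'; omega
        exact ⟨hx, by rw [hπ'x x (hxi x hx) hxc]; exact (key x hx hxc).1 hlt'⟩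
  have hcnot : c ∉ U.ranked.filter (fun x => π x < π i) := by
    rw [Finset.mem_filter, hπc]
    rintro ⟨-, h⟩; omega
  have hcard : (U.ranked.filter (fun x => π' x < π' i)).card
      = (U.ranked.filter (fun x => π x < π i)).card + 1 := by
    rw [hfilter, Finset.card_insert_of_notMem hcnot]
  have hcons : π ∈ U.consistent → π' ∈ U.consistent := by
    intro hπ
    rw [mem_consistent] at hπ ⊢
    intro s' t' hst a' ha' b' hb'
    have hbase := hπ s' t' hst a' ha' b' hb'
    have ha'r : a' ∈ U.ranked := (mem_ranked U).2 ⟨s', ha'⟩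
    have hb'r : b' ∈ U.ranked := (mem_ranked U).2 ⟨t', hb'⟩
    rcases eq_or_ne a' c with rfl | hac
    · have hb'c : b' ≠ a' := fun h => absurd (h ▸ hbase) (lt_irrefl _)
      rw [hπ'c, hπ'x b' (hxi b' hb'r) hb'c]
      calc π i < v := hiv
        _ = π a' := hπc.symm
        _ < π b' := hbase
    · rcases eq_or_ne b' c with rfl | hbc
      · rw [hπ'c, hπ'x a' (hxi a' ha'r) hac]
        have h2 : π a' < v := by rw [← hπc]; exact hbase
        exact (key a' ha'r hac).2 h2
      · rw [hπ'x a' (hxi a' ha'r) hac, hπ'x b' (hxi b' hb'r) hbc]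
        exact hbase
  have hinv : stepb U i π' = π := by
    have hπimem : π i ∈ (U.ranked.image π').filter (fun w => w < π' i) := by
      rw [Finset.mem_filter, hπ'i]
      exact ⟨Finset.mem_image.2 ⟨c, hcmem, hπ'c⟩, hiv⟩
    have hne' : ((U.ranked.image π').filter (fun w => w < π' i)).Nonempty := ⟨_, hπimem⟩
    have hmax : ((U.ranked.image π').filter (fun w => w < π' i)).max' hne' = π i := by
      refine le_antisymm (Finset.max'_le _ _ _ ?_) (Finset.le_max' _ _ hπimem)
      intro w hw
      rw [Finset.mem_filter, hπ'i] at hw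
      obtain ⟨x, hx, hπ'x'⟩ := Finset.mem_image.1 hw.1
      rcases eq_or_ne x c with rfl | hxc
      · rw [← hπ'x', hπ'c]
      · rw [← hπ'x', hπ'x x (hxi x hx) hxc]
        have h2 : π x < v := by
          rw [hπ'x x (hxi x hx) hxc] at hπ'x'
          rw [hπ'x']
          exact hw.2
        exact le_of_lt ((key x hx hxc).2 h2)
    rw [stepb, dif_pos hne', hmax, hπ'i, hπ'def, Equiv.swap_comm, ← mul_assoc,
      Equiv.swap_mul_self, one_mul]
  exact ⟨fun h => hstep ▸ hcons h, by rw [hstep]; exact hcard, by rw [hstep]; exact hinv⟩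


lemma stepb_spec {i : Fin n} (hi : i ∉ U.ranked) {π : Equiv.Perm (Fin n)}
    (hpos : 0 < (U.ranked.filter (fun x => π x < π i)).card) :
    (π ∈ U.consistent → stepb U i π ∈ U.consistent) ∧
    (U.ranked.filter (fun x => (stepb U i π) x < (stepb U i π) i)).card + 1
      = (U.ranked.filter (fun x => π x < π i)).card ∧
    stepf U i (stepb U i π) = π := by
  classical
  have hxi : ∀ x, x ∈ U.ranked → x ≠ i := fun x hx h => hi (h ▸ hx)
  have hne : ((U.ranked.image π).filter (fun v => v < π i)).Nonempty := by
    obtain ⟨x, hx⟩ := Finset.card_pos.1 hpos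
    rw [Finset.mem_filter] at hx
    exact ⟨π x, Finset.mem_filter.2 ⟨Finset.mem_image_of_mem π hx.1, hx.2⟩⟩
  set w := ((U.ranked.image π).filter (fun v => v < π i)).max' hne with hw
  have hvmem := Finset.max'_mem _ hne
  rw [Finset.mem_filter] at hvmem
  obtain ⟨c, hcmem, hπc⟩ := Finset.mem_image.1 hvmem.1
  have hwi : w < π i := hvmem.2
  replace hπc : π c = w := hπc
  have hci : c ≠ i := by
    intro h
    rw [h] at hπc
    rw [hπc] at hwi
    exact lt_irrefl _ hwi
  have hstep : stepb U i π = Equiv.swap (π i) w * π := by rw [stepb, dif_pos hne]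
  set π' : Equiv.Perm (Fin n) := Equiv.swap (π i) w * π with hπ'def
  have hπ'i : π' i = w := by simp [hπ'def, Equiv.swap_apply_left]
  have hπ'c : π' c = π i := by simp [hπ'def, hπc, Equiv.swap_apply_right]
  have hπ'x : ∀ x, x ≠ i → x ≠ c → π' x = π x := by
    intro x h1 h2
    have e1 : π x ≠ π i := fun h => h1 (π.injective h)
    have e2 : π x ≠ w := fun h => h2 (π.injective (h.trans hπc.symm))
    simp [hπ'def, Equiv.swap_apply_of_ne_of_ne e1 e2]
  have key : ∀ x ∈ U.ranked, x ≠ c → (π x < π i ↔ π x < w) := by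
    intro x hx h2
    have e2 : π x ≠ w := fun h => h2 (π.injective (h.trans hπc.symm))
    constructor
    · intro h
      have hmem : π x ∈ (U.ranked.image π).filter (fun v => v < π i) :=
        Finset.mem_filter.2 ⟨Finset.mem_image_of_mem π hx, h⟩
      have : π x ≤ w := Finset.le_max' _ _ hmem
      exact lt_of_le_of_ne this e2
    · intro h; exact h.trans hwi
  have hfilter : U.ranked.filter (fun x => π' x < π' i)
      = (U.ranked.filter (fun x => π x < π i)).erase c := by
    ext x
    rw [Finset.mem_erase, Finset.mem_filter, Finset.mem_filter, hπ'i]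
    constructor
    · rintro ⟨hx, hlt'⟩
      have hxc : x ≠ c := by
        intro h
        rw [h, hπ'c] at hlt'
        exact absurd (hlt'.trans hwi) (lt_irrefl _)
      rw [hπ'x x (hxi x hx) hxc] at hlt'
      exact ⟨hxc, hx, (key x hx hxc).2 hlt'⟩
    · rintro ⟨hxc, hx, hlt'⟩
      exact ⟨hx, by rw [hπ'x x (hxi x hx) hxc]; exact (key x hx hxc).1 hlt'⟩
  have hcmemf : c ∈ U.ranked.filter (fun x => π x < π i) := by
    rw [Finset.mem_filter, hπc]
    exact ⟨hcmem, hwi⟩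
  have hcard : (U.ranked.filter (fun x => π' x < π' i)).card + 1
      = (U.ranked.filter (fun x => π x < π i)).card := by
    rw [hfilter, Finset.card_erase_of_mem hcmemf]
    omega
  have hcons : π ∈ U.consistent → π' ∈ U.consistent := by
    intro hπ
    rw [mem_consistent] at hπ ⊢
    intro s' t' hst a' ha' b' hb'
    have hbase := hπ s' t' hst a' ha' b' hb'
    have ha'r : a' ∈ U.ranked := (mem_ranked U).2 ⟨s', ha'⟩
    have hb'r : b' ∈ U.ranked := (mem_ranked U).2 ⟨t', hb'⟩
    rcases eq_or_ne a' c with rfl | hac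
    · have hb'c : b' ≠ a' := fun h => absurd (h ▸ hbase) (lt_irrefl _)
      rw [hπ'c, hπ'x b' (hxi b' hb'r) hb'c]
      have h2 : w < π b' := by rw [← hπc]; exact hbase
      by_contra hn
      have h3 : π b' < π i :=
        lt_of_le_of_ne (not_lt.1 hn) (fun hh => (hxi b' hb'r) (π.injective hh))
      have := (key b' hb'r hb'c).1 h3
      exact absurd (h2.trans this) (lt_irrefl _)
    · rcases eq_or_ne b' c with rfl | hbc
      · rw [hπ'c, hπ'x a' (hxi a' ha'r) hac]
        have h2 : π a' < w := by rw [← hπc]; exact hbase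
        exact h2.trans hwi
      · rw [hπ'x a' (hxi a' ha'r) hac, hπ'x b' (hxi b' hb'r) hbc]
        exact hbase
  have hinv : stepf U i π' = π := by
    have hπimem : π i ∈ (U.ranked.image π').filter (fun u => π' i < u) := by
      rw [Finset.mem_filter, hπ'i]
      exact ⟨Finset.mem_image.2 ⟨c, hcmem, hπ'c⟩, hwi⟩
    have hne' : ((U.ranked.image π').filter (fun u => π' i < u)).Nonempty := ⟨_, hπimem⟩
    have hmin : ((U.ranked.image π').filter (fun u => π' i < u)).min' hne' = π i := by
      refine le_antisymm (Finset.min'_le _ _ hπimem) (Finset.le_min' _ _ _ ?_)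
      intro u hu
      rw [Finset.mem_filter, hπ'i] at hu
      obtain ⟨x, hx, hπ'x'⟩ := Finset.mem_image.1 hu.1
      rcases eq_or_ne x c with rfl | hxc
      · rw [← hπ'x', hπ'c]
      · rw [← hπ'x', hπ'x x (hxi x hx) hxc]
        have h2 : w < π x := by
          rw [hπ'x x (hxi x hx) hxc] at hπ'x'
          rw [hπ'x']
          exact hu.2
        by_contra hn
        have h3 : π x < π i := not_le.1 hn
        exact absurd (h2.trans ((key x hx hxc).1 h3)) (lt_irrefl _)
    rw [stepf, dif_pos hne', hmin, hπ'i, hπ'def, Equiv.swap_comm, ← mul_assoc,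
      Equiv.swap_mul_self, one_mul]
  exact ⟨fun h => hstep ▸ hcons h, by rw [hstep]; exact hcard, by rw [hstep]; exact hinv⟩


lemma fiber_card_succ {i : Fin n} (hi : i ∉ U.ranked) {a : ℕ} (ha : a < U.ranked.card) :
    (U.consistent.filter (fun π => (U.ranked.filter (fun x => π x < π i)).card = a)).card
      = (U.consistent.filter (fun π =>
          (U.ranked.filter (fun x => π x < π i)).card = a + 1)).card := by
  classical
  refine Finset.card_bij' (fun π _ => stepf U i π) (fun π _ => stepb U i π) ?_ ?_ ?_ ?_
  · intro π hπ
    rw [Finset.mem_filter] at hπ ⊢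
    obtain ⟨h1, h2⟩ := hπ
    have hs := step_spec U hi (π := π) (by omega)
    refine ⟨hs.1 h1, ?_⟩
    rw [hs.2.1, h2]
  · intro π' hπ'
    rw [Finset.mem_filter] at hπ' ⊢
    obtain ⟨h1, h2⟩ := hπ'
    have hs := stepb_spec U hi (π := π') (by omega)
    refine ⟨hs.1 h1, ?_⟩
    show (U.ranked.filter (fun x => (stepb U i π') x < (stepb U i π') i)).card = a
    have := hs.2.1
    omega
  · intro π hπ
    rw [Finset.mem_filter] at hπ
    exact (step_spec U hi (by omega)).2.2
  · intro π' hπ'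
    rw [Finset.mem_filter] at hπ'
    exact (stepb_spec U hi (by omega)).2.2

lemma fiber_card_eq {i : Fin n} (hi : i ∉ U.ranked) {a : ℕ} (ha : a ≤ U.ranked.card) :
    (U.consistent.filter (fun π => (U.ranked.filter (fun x => π x < π i)).card = a)).card
      = (U.consistent.filter (fun π => (U.ranked.filter (fun x => π x < π i)).card = 0)).card := by
  induction a with
  | zero => rfl
  | succ m ih => rw [← fiber_card_succ U hi (by omega), ih (by omega)]

lemma sum_min_shift (τ' φ M : ℕ) :
    ∑ a ∈ Finset.range (τ' + M), min φ (a - τ') = ∑ d ∈ Finset.range M, min φ d := by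
  induction M with
  | zero =>
    rw [Nat.add_zero, Finset.range_zero, Finset.sum_empty]
    refine Finset.sum_eq_zero (fun a ha => ?_)
    rw [Finset.mem_range] at ha
    omega
  | succ m ih =>
    rw [Nat.add_succ, Finset.sum_range_succ, ih, Finset.sum_range_succ]
    congr 1
    omega

lemma sum_min_eval (φ L : ℕ) (h : φ ≤ L) :
    2 * ∑ d ∈ Finset.range L, min φ d = φ * (φ - 1) + 2 * (L - φ) * φ := by
  induction L with
  | zero =>
    have : φ = 0 := by omega
    simp [this]
  | succ m ih =>
    rcases Nat.lt_or_ge φ (m+1) with hlt | hge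
    · have hm : φ ≤ m := by omega
      have hmin : min φ m = φ := by omega
      rw [Finset.sum_range_succ, Nat.mul_add, ih hm, hmin]
      have h2 : m + 1 - φ = (m - φ) + 1 := by omega
      rw [h2]
      ring
    · have hφ : φ = m + 1 := le_antisymm h hge
      subst hφ
      have hterm : ∀ d ∈ Finset.range (m+1), min (m+1) d = d := by
        intro d hd
        rw [Finset.mem_range] at hd
        omega
      rw [Finset.sum_congr rfl hterm, mul_comm, Finset.sum_range_id_mul_two]
      simp

lemma mul_pred_add (a : ℕ) (h : 1 ≤ a) : a * (a - 1) + a = a * a := by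
  cases a with
  | zero => omega
  | succ m =>
    rw [Nat.succ_sub_one]
    ring

end TIRaux

/-- If `i` is unranked and `j ∈ A s` is ranked, with `k = |B_U|`,
`τ = τ_U(j) = 1 + Σ_{t<s}|A t|` and `φ = φ_U(j) = |A s|`, then the fraction of
consistent permutations ranking `i` before `j` is `(τ + (φ−1)/2)/(k+1)`. -/

theorem unranked_before_ranked_fraction (n : ℕ) (U : TIR n) (i j : Fin n)
    (hi : i ∉ U.ranked) (s : Fin U.K) (hj : j ∈ U.A s)
    (τ φ : ℕ)
    (hτ : τ = 1 + ∑ t ∈ Finset.univ.filter (fun t : Fin U.K => t < s), (U.A t).card)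
    (hφ : φ = (U.A s).card) :
    ((U.consistent.filter (fun π => π i < π j)).card : ℚ) / (U.consistent.card : ℚ)
      = ((τ : ℚ) + ((φ : ℚ) - 1) / 2) / ((U.ranked.card : ℚ) + 1) := by
  classical
  obtain ⟨π₀, hπ₀⟩ := TIRaux.consistent_nonempty U
  set k := U.ranked.card with hk
  set τ' := ∑ t ∈ Finset.univ.filter (fun t : Fin U.K => t < s), (U.A t).card with hτ'
  subst hτ hφ
  set N := U.consistent.card with hN
  set N1 := (U.consistent.filter (fun π => π i < π j)).card with hN1
  set c0 := (U.consistent.filter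
    (fun π => (U.ranked.filter (fun x => π x < π i)).card = 0)).card with hc0
  have hφ1 : 1 ≤ (U.A s).card := Finset.card_pos.2 (U.nonempty s)
  have hρle : ∀ π : Equiv.Perm (Fin n),
      (U.ranked.filter (fun x => π x < π i)).card ≤ k :=
    fun π => Finset.card_filter_le _ _
  have hmaps : ∀ π ∈ U.consistent,
      (U.ranked.filter (fun x => π x < π i)).card ∈ Finset.range (k+1) :=
    fun π _ => Finset.mem_range.2 (by have := hρle π; omega)
  -- N = (k+1) * c0
  have hA : N = (k+1) * c0 := by
    rw [hN, Finset.card_eq_sum_card_fiberwise hmaps,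
      Finset.sum_congr rfl (fun a ha =>
        TIRaux.fiber_card_eq U hi (by rw [Finset.mem_range] at ha; omega)),
      Finset.sum_const, Finset.card_range, smul_eq_mul, ← hc0]
  -- sum of q over consistent
  set T := ∑ a ∈ Finset.range (k+1), min (U.A s).card (a - τ') with hT
  have hq : ∑ π ∈ U.consistent, ((U.A s).filter (fun x => π x < π i)).card = T * c0 := by
    have e1 : ∑ π ∈ U.consistent, ((U.A s).filter (fun x => π x < π i)).card
        = ∑ π ∈ U.consistent,
            min (U.A s).card ((U.ranked.filter (fun x => π x < π i)).card - τ') :=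
      Finset.sum_congr rfl (fun π hπ => TIRaux.q_eq U hπ)
    have e2 := Finset.sum_fiberwise_of_maps_to hmaps
      (fun π => min (U.A s).card ((U.ranked.filter (fun x => π x < π i)).card - τ'))
    have e3 : ∀ a ∈ Finset.range (k+1),
        (∑ π ∈ U.consistent.filter
            (fun π => (U.ranked.filter (fun x => π x < π i)).card = a),
          min (U.A s).card ((U.ranked.filter (fun x => π x < π i)).card - τ'))
        = min (U.A s).card (a - τ') * c0 := by
      intro a ha
      have hconst : ∀ π ∈ U.consistent.filter
          (fun π => (U.ranked.filter (fun x => π x < π i)).card = a),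
          min (U.A s).card ((U.ranked.filter (fun x => π x < π i)).card - τ')
            = min (U.A s).card (a - τ') := by
        intro π hπ
        rw [Finset.mem_filter] at hπ
        rw [hπ.2]
      rw [Finset.sum_congr rfl hconst, Finset.sum_const, smul_eq_mul, mul_comm,
        TIRaux.fiber_card_eq U hi (by rw [Finset.mem_range] at ha; omega), ← hc0]
    rw [e1, ← e2, Finset.sum_congr rfl e3, ← Finset.sum_mul, ← hT]
  -- splitting A s by < / >
  have hsplit2 : ∀ π : Equiv.Perm (Fin n),
      ((U.A s).filter (fun b => π i < π b)).card
        + ((U.A s).filter (fun x => π x < π i)).card = (U.A s).card := by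
    intro π
    rw [← Finset.card_filter_add_card_filter_not (s := U.A s)
      (p := fun b => π i < π b)]
    congr 2
    refine (Finset.filter_congr ?_)
    intro b hb
    have hbi : b ≠ i := fun h => hi (h ▸ (TIRaux.mem_ranked U).2 ⟨s, hb⟩)
    constructor
    · intro h
      exact not_lt.2 (le_of_lt h)
    · intro h
      exact lt_of_le_of_ne (not_lt.1 h) (fun hh => hbi (π.injective hh))
  have hB : (U.A s).card * N1 + T * c0 = (U.A s).card * N := by
    rw [hN1, TIRaux.phi_mul_N1 U hi hj, ← hq, ← Finset.sum_add_distrib,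
      Finset.sum_congr rfl (fun π _ => hsplit2 π), Finset.sum_const, smul_eq_mul,
      hN, mul_comm]
  -- bound
  have hτk : τ' + (U.A s).card ≤ k := by
    have hranked : k = ∑ t, (U.A t).card := by
      rw [hk, TIR.ranked]
      exact Finset.card_biUnion (fun t _ t' _ h => U.disjoint t t' h)
    have h2 : τ' + (U.A s).card
        = ∑ t ∈ insert s (Finset.univ.filter (fun t : Fin U.K => t < s)), (U.A t).card := by
      rw [Finset.sum_insert (by simp), hτ']
      ring
    rw [hranked, h2]
    exact Finset.sum_le_sum_of_subset (Finset.subset_univ _)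
  -- evaluate T
  have hshift := TIRaux.sum_min_shift τ' (U.A s).card (k + 1 - τ')
  have hrange : τ' + (k + 1 - τ') = k + 1 := by omega
  rw [hrange] at hshift
  have heval := TIRaux.sum_min_eval (U.A s).card (k + 1 - τ') (by omega)
  have hCnat : 2 * T = (U.A s).card * ((U.A s).card - 1)
      + 2 * ((k + 1 - τ') - (U.A s).card) * (U.A s).card := by
    rw [hT, hshift]
    exact heval
  have hCnat' : 2*T + 2*(τ' + (U.A s).card)*(U.A s).card + (U.A s).card
      = (U.A s).card*(U.A s).card + 2*(k+1)*(U.A s).card := by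
    have hD : (k + 1 - τ') - (U.A s).card + (τ' + (U.A s).card) = k + 1 := by omega
    calc 2*T + 2*(τ' + (U.A s).card)*(U.A s).card + (U.A s).card
        = ((U.A s).card * ((U.A s).card - 1) + (U.A s).card)
          + 2*(((k+1-τ') - (U.A s).card) + (τ' + (U.A s).card))*(U.A s).card := by
          rw [hCnat]; ring
      _ = (U.A s).card*(U.A s).card + 2*(k+1)*(U.A s).card := by
          rw [TIRaux.mul_pred_add _ hφ1, hD]
  -- pass to ℚ
  have hN0 : N ≠ 0 := (Finset.card_pos.2 ⟨π₀, hπ₀⟩).ne'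
  have hc00 : c0 ≠ 0 := by
    intro h
    rw [h, Nat.mul_zero] at hA
    exact hN0 hA
  have hAQ : (N:ℚ) = ((k:ℚ)+1) * (c0:ℚ) := by exact_mod_cast hA
  have hBQ : ((U.A s).card:ℚ) * (N1:ℚ) + (T:ℚ) * (c0:ℚ)
      = ((U.A s).card:ℚ) * (N:ℚ) := by exact_mod_cast hB
  have hCQ : 2*(T:ℚ) + 2*((τ':ℚ) + ((U.A s).card:ℚ))*((U.A s).card:ℚ) + ((U.A s).card:ℚ)
      = ((U.A s).card:ℚ)*((U.A s).card:ℚ) + 2*((k:ℚ)+1)*((U.A s).card:ℚ) := by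
    exact_mod_cast hCnat'
  have hφQ0 : ((U.A s).card:ℚ) ≠ 0 := Nat.cast_ne_zero.2 (by omega)
  have hc0Q : (c0:ℚ) ≠ 0 := Nat.cast_ne_zero.2 hc00
  have hkQ : ((k:ℚ)+1) ≠ 0 := by positivity
  have h : ((U.A s).card:ℚ) * (N1:ℚ) + (T:ℚ) * (c0:ℚ)
      = ((U.A s).card:ℚ) * (((k:ℚ)+1) * (c0:ℚ)) := by
    rw [← hAQ]; exact hBQ
  have h2 : ((U.A s).card:ℚ) * (2 * (N1:ℚ))
      = ((U.A s).card:ℚ) * ((c0:ℚ) * (2*(τ':ℚ) + ((U.A s).card:ℚ) + 1)) := by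
    linear_combination 2 * h - (c0:ℚ) * hCQ
  have hN1Q' : 2 * (N1:ℚ) = (c0:ℚ) * (2*(τ':ℚ) + ((U.A s).card:ℚ) + 1) :=
    mul_left_cancel₀ hφQ0 h2
  have hN1v : (N1:ℚ) = (c0:ℚ) * (2*(τ':ℚ) + ((U.A s).card:ℚ) + 1)/2 := by
    linear_combination (1/2 : ℚ) * hN1Q'
  rw [hN1v, hAQ]
  push_cast
  field_simp
  ring
end

section
/- (Proposition 3) Let U and V be tied incomplete rankings on {1,…,n} with consistent sets S = S_U and R = S_V. For a tied incomplete ranking W with k_W ranked items and distinct i, j ∈ {1,…,n}, define p_{ij}(W) as follows: if both i and j are ranked in W with τ_W(i) ≠ τ_W(j), then p_{ij}(W) = 1 if τ_W(i) < τ_W(j) and 0 otherwise; if only i is ranked, p_{ij}(W) = 1 − (τ_W(i) + (φ_W(i)−1)/2)/(k_W + 1); if only j is ranked, p_{ij}(W) = (τ_W(j) + (φ_W(j)−1)/2)/(k_W + 1); otherwise (both unranked, or both ranked and tied) p_{ij}(W) = 1/2. Then the average Kendall tau distance satisfies (1/(|S||R|)) Σ_{π∈S} Σ_{σ∈R} T(π,σ)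 = n(n−1)/4 − (1/2) Σ_{1 ≤ i < j ≤ n} (1 − 2p_{ij}(U))(1 − 2p_{ij}(V)). -/
/-- Kendall's tau distance between two permutations of `Fin n`. -/
def kendall {n : ℕ} (π σ : Equiv.Perm (Fin n)) : ℕ :=
  (Finset.univ.filter (fun p : Fin n × Fin n =>
    p.1 < p.2 ∧ ((π p.1 < π p.2) ↔ ¬ (σ p.1 < σ p.2)))).card

/-- `τ_W(i)`: for a ranked item `i ∈ A s`, this is `1 + |A 1| + ⋯ + |A (s-1)|`, the
minimal relative rank of `i` among the ranked items. -/
def TIR.tau {n : ℕ} (W : TIR n) (i : Fin n) : ℕ :=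
  1 + ∑ s ∈ Finset.univ.filter
        (fun s : Fin W.K => ∃ t : Fin W.K, s < t ∧ i ∈ W.A t), (W.A s).card

/-- `φ_W(i)`: for a ranked item `i ∈ A s`, the size `|A s|` of its block (number of
items tied with `i`, including `i` itself). -/
def TIR.phi {n : ℕ} (W : TIR n) (i : Fin n) : ℕ :=
  ∑ s ∈ Finset.univ.filter (fun s : Fin W.K => i ∈ W.A s), (W.A s).card

/-- The probability `p_{ij}(W)` that item `i` is preferred to item `j` under the
uniform distribution over permutations consistent with `W`, as given in Proposition 3:
if both are ranked with `τ_W(i) ≠ τ_W(j)` it is the indicator of `τ_W(i) < τ_W(j)`;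
if only `i` is ranked it is `1 − (τ_W(i) + (φ_W(i)−1)/2)/(k_W+1)`;
if only `j` is ranked it is `(τ_W(j) + (φ_W(j)−1)/2)/(k_W+1)`;
otherwise it is `1/2`. -/
def TIR.pij {n : ℕ} (W : TIR n) (i j : Fin n) : ℚ :=
  if i ∈ W.ranked then
    if j ∈ W.ranked then
      if W.tau i = W.tau j then 1 / 2
      else if W.tau i < W.tau j then 1 else 0
    else 1 - ((W.tau i : ℚ) + ((W.phi i : ℚ) - 1) / 2) / ((W.ranked.card : ℚ) + 1)
  else
    if j ∈ W.ranked then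
      ((W.tau j : ℚ) + ((W.phi j : ℚ) - 1) / 2) / ((W.ranked.card : ℚ) + 1)
    else 1 / 2

section Aux

open Finset Equiv

namespace TIRAux

variable {n : ℕ}

lemma mem_ranked {U : TIR n} {i : Fin n} : i ∈ U.ranked ↔ ∃ s, i ∈ U.A s := by
  simp [TIR.ranked]

lemma mem_consistent {U : TIR n} {π : Equiv.Perm (Fin n)} :
    π ∈ U.consistent ↔ ∀ s t : Fin U.K, s < t → ∀ a ∈ U.A s, ∀ b ∈ U.A t, π a < π b := by
  simp [TIR.consistent]

lemma block_unique {U : TIR n} {i : Fin n} {s t : Fin U.K}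
    (hs : i ∈ U.A s) (ht : i ∈ U.A t) : s = t := by
  by_contra h
  exact Finset.disjoint_left.mp (U.disjoint s t h) hs ht

lemma mem_ranked_of_mem {U : TIR n} {i : Fin n} {s : Fin U.K} (h : i ∈ U.A s) :
    i ∈ U.ranked := mem_ranked.mpr ⟨s, h⟩

/-- sum of sizes of blocks strictly before `s₀`. -/
def pre (U : TIR n) (s₀ : Fin U.K) : ℕ :=
  ∑ s ∈ Finset.univ.filter (fun s => s < s₀), (U.A s).card

lemma tau_eq {U : TIR n} {i : Fin n} {s₀ : Fin U.K} (h : i ∈ U.A s₀) :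
    U.tau i = 1 + pre U s₀ := by
  unfold TIR.tau pre
  congr 1
  apply Finset.sum_congr _ (fun _ _ => rfl)
  apply Finset.filter_congr
  intro s _
  constructor
  · rintro ⟨t, hst, hit⟩
    rwa [block_unique hit h] at hst
  · intro hs
    exact ⟨s₀, hs, h⟩

lemma phi_eq {U : TIR n} {i : Fin n} {s₀ : Fin U.K} (h : i ∈ U.A s₀) :
    U.phi i = (U.A s₀).card := by
  unfold TIR.phi
  rw [show Finset.univ.filter (fun s : Fin U.K => i ∈ U.A s) = {s₀} by
    ext s
    simp only [Finset.mem_filter, Finset.mem_univ, true_and, Finset.mem_singleton]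
    exact ⟨fun hs => block_unique hs h, fun hs => hs ▸ h⟩]
  simp

lemma pre_lt {U : TIR n} {s₀ t₀ : Fin U.K} (h : s₀ < t₀) : pre U s₀ < pre U t₀ := by
  have hsub : insert s₀ (Finset.univ.filter (fun s => s < s₀))
      ⊆ Finset.univ.filter (fun s => s < t₀) := by
    intro s hs
    simp only [Finset.mem_insert, Finset.mem_filter, Finset.mem_univ, true_and] at hs ⊢
    rcases hs with rfl | hs
    · exact h
    · exact hs.trans h
  have hns : s₀ ∉ Finset.univ.filter (fun s : Fin U.K => s < s₀) := by simp
  calc pre U s₀ < (U.A s₀).card + pre U s₀ := by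
        have := (U.nonempty s₀).card_pos; omega
    _ = ∑ s ∈ insert s₀ (Finset.univ.filter (fun s => s < s₀)), (U.A s).card := by
        rw [Finset.sum_insert hns]; rfl
    _ ≤ pre U t₀ := Finset.sum_le_sum_of_subset hsub

lemma tau_lt {U : TIR n} {i j : Fin n} {s₀ t₀ : Fin U.K}
    (hi : i ∈ U.A s₀) (hj : j ∈ U.A t₀) (h : s₀ < t₀) : U.tau i < U.tau j := by
  rw [tau_eq hi, tau_eq hj]
  exact Nat.add_lt_add_left (pre_lt h) 1

/-- the rank function: number of ranked items strictly before `x` under `π`. -/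
def rk (U : TIR n) (π : Equiv.Perm (Fin n)) (x : Fin n) : ℕ :=
  (U.ranked.filter (fun b => π b < π x)).card

lemma rk_le (U : TIR n) (π : Equiv.Perm (Fin n)) (x : Fin n) :
    rk U π x ≤ U.ranked.card :=
  Finset.card_le_card (Finset.filter_subset _ _)

lemma rk_lt_rk {U : TIR n} {π : Equiv.Perm (Fin n)} {a b : Fin n}
    (ha : a ∈ U.ranked) (hab : π a < π b) : rk U π a < rk U π b := by
  apply Finset.card_lt_card
  constructor
  · intro c hc
    simp only [Finset.mem_filter] at hc ⊢
    exact ⟨hc.1, hc.2.trans hab⟩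
  · intro hsub
    have : a ∈ U.ranked.filter (fun c => π c < π a) := hsub (by simp [ha, hab])
    simp at this

lemma lt_iff_rk_le {U : TIR n} {π : Equiv.Perm (Fin n)} {u i : Fin n}
    (hu : u ∉ U.ranked) (hi : i ∈ U.ranked) : π u < π i ↔ rk U π u ≤ rk U π i := by
  constructor
  · intro h
    apply Finset.card_le_card
    intro c hc
    simp only [Finset.mem_filter] at hc ⊢
    exact ⟨hc.1, hc.2.trans h⟩
  · intro h
    by_contra hlt
    have hne : π i ≠ π u := fun he => hu (π.injective he ▸ hi)
    have hiu : π i < π u := lt_of_le_of_ne (not_lt.mp hlt) hne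
    exact absurd h (not_le.mpr (rk_lt_rk hi hiu))

end TIRAux

end Aux
section Aux2

open Finset Equiv

namespace TIRAux

variable {n : ℕ}

lemma ranked_filter_eq (U : TIR n) (P : Fin n → Prop) [DecidablePred P] :
    U.ranked.filter P = Finset.univ.biUnion (fun s => (U.A s).filter P) := by
  ext x
  simp only [Finset.mem_filter, Finset.mem_biUnion, Finset.mem_univ, true_and, mem_ranked]
  tauto

lemma card_ranked_filter (U : TIR n) (P : Fin n → Prop) [DecidablePred P] :
    (U.ranked.filter P).card = ∑ s : Fin U.K, ((U.A s).filter P).card := by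
  rw [ranked_filter_eq]
  rw [Finset.card_biUnion]
  intro s _ t _ hst
  exact Finset.disjoint_filter_filter (U.disjoint s t hst)

lemma rk_decomp {U : TIR n} {π : Equiv.Perm (Fin n)} (hπ : π ∈ U.consistent)
    {i : Fin n} {s₀ : Fin U.K} (hi : i ∈ U.A s₀) :
    rk U π i = pre U s₀ + ((U.A s₀).filter (fun b => π b < π i)).card := by
  rw [mem_consistent] at hπ
  unfold rk
  rw [card_ranked_filter]
  rw [← Finset.sum_filter_add_sum_filter_not Finset.univ (fun s => s < s₀)]
  congr 1
  · unfold pre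
    apply Finset.sum_congr rfl
    intro s hs
    simp only [Finset.mem_filter, Finset.mem_univ, true_and] at hs
    rw [Finset.filter_true_of_mem]
    intro b hb
    exact hπ s s₀ hs b hb i hi
  · rw [Finset.sum_eq_single_of_mem s₀ (by simp)]
    intro s hs hne
    simp only [Finset.mem_filter, Finset.mem_univ, true_and, not_lt] at hs
    have hlt : s₀ < s := lt_of_le_of_ne hs (fun h => hne h.symm)
    rw [Finset.card_eq_zero, Finset.filter_eq_empty_iff]
    intro b hb
    exact not_lt.mpr (le_of_lt (hπ s₀ s hlt i hi b hb))

lemma rk_mem_Ico {U : TIR n} {π : Equiv.Perm (Fin n)} (hπ : π ∈ U.consistent)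
    {i : Fin n} {s₀ : Fin U.K} (hi : i ∈ U.A s₀) :
    rk U π i ∈ Finset.Ico (pre U s₀) (pre U s₀ + (U.A s₀).card) := by
  rw [rk_decomp hπ hi, Finset.mem_Ico]
  constructor
  · exact Nat.le_add_right _ _
  · apply Nat.add_lt_add_left
    apply Finset.card_lt_card
    constructor
    · exact Finset.filter_subset _ _
    · intro hsub
      have : i ∈ (U.A s₀).filter (fun b => π b < π i) := hsub hi
      simp at this

lemma pre_add_card_le {U : TIR n} (s₀ : Fin U.K) :
    pre U s₀ + (U.A s₀).card ≤ U.ranked.card := by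
  have : U.ranked.card = ∑ s : Fin U.K, (U.A s).card := by
    simpa using card_ranked_filter U (fun _ => True)
  rw [this]
  have hns : s₀ ∉ Finset.univ.filter (fun s : Fin U.K => s < s₀) := by simp
  calc pre U s₀ + (U.A s₀).card
      = ∑ s ∈ insert s₀ (Finset.univ.filter (fun s => s < s₀)), (U.A s).card := by
        rw [Finset.sum_insert hns]; unfold pre; omega
    _ ≤ ∑ s : Fin U.K, (U.A s).card :=
        Finset.sum_le_sum_of_subset (fun s _ => Finset.mem_univ s)

lemma rk_injOn {U : TIR n} {π : Equiv.Perm (Fin n)} {a b : Fin n}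
    (ha : a ∈ U.ranked) (hb : b ∈ U.ranked) (h : rk U π a = rk U π b) : a = b := by
  by_contra hne
  have hpne : π a ≠ π b := fun he => hne (π.injective he)
  rcases hpne.lt_or_gt with hlt | hlt
  · exact absurd h (Nat.ne_of_lt (rk_lt_rk ha hlt))
  · exact absurd h.symm (Nat.ne_of_lt (rk_lt_rk hb hlt))

lemma block_filter_rk_card {U : TIR n} {π : Equiv.Perm (Fin n)} (hπ : π ∈ U.consistent)
    {s₀ : Fin U.K} {r : ℕ} (hr : r ∈ Finset.Ico (pre U s₀) (pre U s₀ + (U.A s₀).card)) :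
    ((U.A s₀).filter (fun b => rk U π b = r)).card = 1 := by
  have hinj : Set.InjOn (rk U π) (U.A s₀) := by
    intro a ha b hb h
    exact rk_injOn (mem_ranked_of_mem ha) (mem_ranked_of_mem hb) h
  have himg : (U.A s₀).image (rk U π) = Finset.Ico (pre U s₀) (pre U s₀ + (U.A s₀).card) := by
    apply Finset.eq_of_subset_of_card_le
    · intro r' hr'
      obtain ⟨b, hb, rfl⟩ := Finset.mem_image.mp hr'
      exact rk_mem_Ico hπ hb
    · rw [Nat.card_Ico, Finset.card_image_of_injOn hinj]
      omega
  have hrmem : r ∈ (U.A s₀).image (rk U π) := himg ▸ hr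
  obtain ⟨b, hb, hbr⟩ := Finset.mem_image.mp hrmem
  rw [Finset.card_eq_one]
  refine ⟨b, ?_⟩
  ext c
  simp only [Finset.mem_filter, Finset.mem_singleton]
  constructor
  · rintro ⟨hc, hcr⟩
    exact hinj hc hb (hcr.trans hbr.symm)
  · rintro rfl
    exact ⟨hb, hbr⟩

lemma consistent_mul_aux {U : TIR n} {π g : Equiv.Perm (Fin n)}
    (hg : ∀ s, ∀ x ∈ U.A s, g x ∈ U.A s) (hπ : π ∈ U.consistent) :
    π * g ∈ U.consistent := by
  rw [mem_consistent] at hπ ⊢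
  intro s t hst a ha b hb
  exact hπ s t hst (g a) (hg s a ha) (g b) (hg t b hb)

lemma inv_block_preserve {U : TIR n} {g : Equiv.Perm (Fin n)}
    (hg : ∀ s, ∀ x ∈ U.A s, g x ∈ U.A s) : ∀ s, ∀ x ∈ U.A s, g⁻¹ x ∈ U.A s := by
  intro s x hx
  have himg : (U.A s).image g = U.A s := by
    apply Finset.eq_of_subset_of_card_le
    · intro y hy
      obtain ⟨z, hz, rfl⟩ := Finset.mem_image.mp hy
      exact hg s z hz
    · rw [Finset.card_image_of_injective _ g.injective]
  rw [← himg] at hx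
  obtain ⟨y, hy, rfl⟩ := Finset.mem_image.mp hx
  simpa using hy

lemma consistent_mul {U : TIR n} {π g : Equiv.Perm (Fin n)}
    (hg : ∀ s, ∀ x ∈ U.A s, g x ∈ U.A s) :
    π * g ∈ U.consistent ↔ π ∈ U.consistent := by
  constructor
  · intro h
    have := consistent_mul_aux (inv_block_preserve hg) h
    rwa [mul_assoc, mul_inv_cancel, mul_one] at this
  · exact consistent_mul_aux hg

lemma rk_mul {U : TIR n} {π g : Equiv.Perm (Fin n)}
    (hg : ∀ b, b ∈ U.ranked ↔ g b ∈ U.ranked) (x : Fin n) :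
    rk U (π * g) x = rk U π (g x) := by
  unfold rk
  apply Finset.card_nbij' (fun c => g c) (fun c => g.symm c)
  · intro b hb
    rw [Finset.mem_coe, Finset.mem_filter] at hb
    rw [Finset.mem_coe, Finset.mem_filter]
    simp only [Finset.mem_filter, Equiv.Perm.coe_mul, Function.comp_apply] at hb ⊢
    exact ⟨(hg b).mp hb.1, hb.2⟩
  · intro b hb
    rw [Finset.mem_coe, Finset.mem_filter] at hb
    rw [Finset.mem_coe, Finset.mem_filter]
    simp only [Finset.mem_filter, Equiv.Perm.coe_mul, Function.comp_apply] at hb ⊢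
    refine ⟨?_, ?_⟩
    · rw [hg (g.symm b)]
      simpa using hb.1
    · simpa using hb.2
  · intro a _; simp
  · intro a _; simp

lemma swap_block_preserve {U : TIR n} {a b : Fin n} {s₀ : Fin U.K}
    (ha : a ∈ U.A s₀) (hb : b ∈ U.A s₀) :
    ∀ s, ∀ x ∈ U.A s, Equiv.swap a b x ∈ U.A s := by
  intro s x hx
  by_cases hxa : x = a
  · subst hxa
    rw [Equiv.swap_apply_left]
    rwa [block_unique hx ha]
  · by_cases hxb : x = b
    · subst hxb
      rw [Equiv.swap_apply_right]
      rwa [block_unique hx hb]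
    · rwa [Equiv.swap_apply_of_ne_of_ne hxa hxb]

lemma swap_unranked_preserve {U : TIR n} {a b : Fin n}
    (ha : a ∉ U.ranked) (hb : b ∉ U.ranked) :
    ∀ s, ∀ x ∈ U.A s, Equiv.swap a b x ∈ U.A s := by
  intro s x hx
  have hxa : x ≠ a := fun h => ha (h ▸ mem_ranked_of_mem hx)
  have hxb : x ≠ b := fun h => hb (h ▸ mem_ranked_of_mem hx)
  rwa [Equiv.swap_apply_of_ne_of_ne hxa hxb]

lemma count_half {U : TIR n} {a b : Fin n}
    (hg : ∀ s, ∀ x ∈ U.A s, Equiv.swap a b x ∈ U.A s) :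
    (U.consistent.filter (fun π => π a < π b)).card
      = (U.consistent.filter (fun π => π b < π a)).card := by
  apply Finset.card_nbij' (fun π => π * Equiv.swap a b) (fun π => π * Equiv.swap a b)
  · intro π hπ
    simp only [Finset.mem_coe, Finset.mem_filter] at hπ ⊢
    refine ⟨(consistent_mul hg).mpr hπ.1, ?_⟩
    simp only [Equiv.Perm.mul_apply, Equiv.swap_apply_left, Equiv.swap_apply_right]
    exact hπ.2
  · intro π hπ
    simp only [Finset.mem_coe, Finset.mem_filter] at hπ ⊢
    refine ⟨(consistent_mul hg).mpr hπ.1, ?_⟩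
    simp only [Equiv.Perm.mul_apply, Equiv.swap_apply_left, Equiv.swap_apply_right]
    exact hπ.2
  · intro π _; exact Equiv.mul_swap_mul_self a b π
  · intro π _; exact Equiv.mul_swap_mul_self a b π

lemma count_add {U : TIR n} {a b : Fin n} (hab : a ≠ b) :
    (U.consistent.filter (fun π => π a < π b)).card
      + (U.consistent.filter (fun π => π b < π a)).card = U.consistent.card := by
  rw [show U.consistent.filter (fun π => π b < π a)
      = U.consistent.filter (fun π => ¬ (π a < π b)) by
    apply Finset.filter_congr
    intro π _
    have : π b ≠ π a := fun h => hab (π.injective h).symm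
    constructor
    · exact fun h => not_lt.mpr (le_of_lt h)
    · exact fun h => lt_of_le_of_ne (not_lt.mp h) this]
  exact Finset.card_filter_add_card_filter_not _

lemma consistent_nonempty (U : TIR n) : U.consistent.Nonempty := by
  classical
  set key : Fin n → ℕ := fun x => ∑ s ∈ Finset.univ.filter (fun s => x ∈ U.A s), s.val with hkey
  have hkeyval : ∀ (s : Fin U.K) (x : Fin n), x ∈ U.A s → key x = s.val := by
    intro s x hx
    rw [hkey]
    simp only
    rw [show Finset.univ.filter (fun t : Fin U.K => x ∈ U.A t) = {s} by
      ext t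
      simp only [Finset.mem_filter, Finset.mem_univ, true_and, Finset.mem_singleton]
      exact ⟨fun ht => block_unique ht hx, fun ht => ht ▸ hx⟩]
    simp
  refine ⟨(Tuple.sort key)⁻¹, ?_⟩
  rw [mem_consistent]
  intro s t hst a ha b hb
  by_contra hab
  have hle : (Tuple.sort key)⁻¹ b ≤ (Tuple.sort key)⁻¹ a := not_lt.mp hab
  have := Tuple.monotone_sort key hle
  simp only [Function.comp_apply, Equiv.Perm.coe_inv, Equiv.apply_symm_apply] at this
  rw [hkeyval s a ha, hkeyval t b hb] at this
  exact absurd ((Fin.lt_iff_val_lt_val).mp hst) (not_lt.mpr this)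

end TIRAux

end Aux2
section Aux3

open Finset Equiv

namespace TIRAux

variable {n : ℕ}

/-- The ranked element just after `u` in the order given by `π` (junk value `u` if none). -/
noncomputable def nxt (U : TIR n) (π : Equiv.Perm (Fin n)) (u : Fin n) : Fin n :=
  if h : ((U.ranked.filter (fun b => π u < π b)).image π).Nonempty
  then π.symm (((U.ranked.filter (fun b => π u < π b)).image π).min' h) else u

/-- The ranked element just before `u` in the order given by `π` (junk value `u` if none). -/
noncomputable def prv (U : TIR n) (π : Equiv.Perm (Fin n)) (u : Fin n) : Fin n :=
  if h : ((U.ranked.filter (fun b => π b < π u)).image π).Nonempty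
  then π.symm (((U.ranked.filter (fun b => π b < π u)).image π).max' h) else u

lemma nxt_spec {U : TIR n} {π : Equiv.Perm (Fin n)} {u : Fin n}
    (h : (U.ranked.filter (fun b => π u < π b)).Nonempty) :
    nxt U π u ∈ U.ranked ∧ π u < π (nxt U π u)
      ∧ ∀ b ∈ U.ranked, π u < π b → π (nxt U π u) ≤ π b := by
  have himg : ((U.ranked.filter (fun b => π u < π b)).image π).Nonempty := h.image π
  rw [nxt, dif_pos himg]
  obtain ⟨b₀, hb₀, hb₀e⟩ := Finset.mem_image.mp (Finset.min'_mem _ himg)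
  rw [← hb₀e, Equiv.symm_apply_apply]
  simp only [Finset.mem_filter] at hb₀
  refine ⟨hb₀.1, hb₀.2, ?_⟩
  intro b hb hub
  rw [hb₀e]
  apply Finset.min'_le
  apply Finset.mem_image_of_mem
  simp only [Finset.mem_filter]
  exact ⟨hb, hub⟩

lemma prv_spec {U : TIR n} {π : Equiv.Perm (Fin n)} {u : Fin n}
    (h : (U.ranked.filter (fun b => π b < π u)).Nonempty) :
    prv U π u ∈ U.ranked ∧ π (prv U π u) < π u
      ∧ ∀ b ∈ U.ranked, π b < π u → π b ≤ π (prv U π u) := by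
  have himg : ((U.ranked.filter (fun b => π b < π u)).image π).Nonempty := h.image π
  rw [prv, dif_pos himg]
  obtain ⟨b₀, hb₀, hb₀e⟩ := Finset.mem_image.mp (Finset.max'_mem _ himg)
  rw [← hb₀e, Equiv.symm_apply_apply]
  simp only [Finset.mem_filter] at hb₀
  refine ⟨hb₀.1, hb₀.2, ?_⟩
  intro b hb hbu
  rw [hb₀e]
  apply Finset.le_max'
  apply Finset.mem_image_of_mem
  simp only [Finset.mem_filter]
  exact ⟨hb, hbu⟩

lemma nxt_eq {U : TIR n} {π : Equiv.Perm (Fin n)} {u b : Fin n}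
    (hb : b ∈ U.ranked) (hub : π u < π b)
    (hmin : ∀ c ∈ U.ranked, π u < π c → π b ≤ π c) : nxt U π u = b := by
  have h : (U.ranked.filter (fun c => π u < π c)).Nonempty := by
    refine ⟨b, ?_⟩
    simp only [Finset.mem_filter]
    exact ⟨hb, hub⟩
  obtain ⟨h1, h2, h3⟩ := nxt_spec h
  have := le_antisymm (h3 b hb hub) (hmin _ h1 h2)
  exact π.injective this

lemma prv_eq {U : TIR n} {π : Equiv.Perm (Fin n)} {u b : Fin n}
    (hb : b ∈ U.ranked) (hbu : π b < π u)
    (hmax : ∀ c ∈ U.ranked, π c < π u → π c ≤ π b) : prv U π u = b := by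
  have h : (U.ranked.filter (fun c => π c < π u)).Nonempty := by
    refine ⟨b, ?_⟩
    simp only [Finset.mem_filter]
    exact ⟨hb, hbu⟩
  obtain ⟨h1, h2, h3⟩ := prv_spec h
  have := le_antisymm (h3 b hb hbu) (hmax _ h1 h2)
  exact π.injective this.symm

/-- Consistency is preserved by swapping `u` with the ranked item just after it. -/
lemma consistent_swap_nxt {U : TIR n} {π : Equiv.Perm (Fin n)} {u b : Fin n}
    (hπ : π ∈ U.consistent) (hu : u ∉ U.ranked) (hb : b ∈ U.ranked) (hub : π u < π b)
    (hmin : ∀ c ∈ U.ranked, π u < π c → π b ≤ π c) :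
    π * Equiv.swap u b ∈ U.consistent := by
  rw [mem_consistent] at hπ ⊢
  intro s t hst a ha c hc
  have hau : a ≠ u := fun h => hu (h ▸ mem_ranked_of_mem ha)
  have hcu : c ≠ u := fun h => hu (h ▸ mem_ranked_of_mem hc)
  simp only [Equiv.Perm.mul_apply]
  by_cases hab : a = b
  · subst hab
    have hcb : c ≠ a := by
      intro h
      exact absurd (block_unique (h ▸ hc) ha) (Ne.symm (ne_of_lt hst))
    rw [Equiv.swap_apply_right, Equiv.swap_apply_of_ne_of_ne hcu hcb]
    exact hub.trans (hπ s t hst a ha c hc)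
  · rw [Equiv.swap_apply_of_ne_of_ne hau hab]
    by_cases hcb : c = b
    · subst hcb
      rw [Equiv.swap_apply_right]
      have hac : π a < π c := hπ s t hst a ha c hc
      by_contra hle
      have : π c ≤ π a := hmin a (mem_ranked_of_mem ha) (lt_of_le_of_ne (not_lt.mp hle)
        (fun h => hau (π.injective h.symm)))
      exact absurd hac (not_lt.mpr this)
    · rw [Equiv.swap_apply_of_ne_of_ne hcu hcb]
      exact hπ s t hst a ha c hc

/-- Consistency is preserved by swapping `u` with the ranked item just before it. -/
lemma consistent_swap_prv {U : TIR n} {π : Equiv.Perm (Fin n)} {u b : Fin n}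
    (hπ : π ∈ U.consistent) (hu : u ∉ U.ranked) (hb : b ∈ U.ranked) (hbu : π b < π u)
    (hmax : ∀ c ∈ U.ranked, π c < π u → π c ≤ π b) :
    π * Equiv.swap u b ∈ U.consistent := by
  rw [mem_consistent] at hπ ⊢
  intro s t hst a ha c hc
  have hau : a ≠ u := fun h => hu (h ▸ mem_ranked_of_mem ha)
  have hcu : c ≠ u := fun h => hu (h ▸ mem_ranked_of_mem hc)
  simp only [Equiv.Perm.mul_apply]
  by_cases hab : a = b
  · subst hab
    have hcb : c ≠ a := by
      intro h
      exact absurd (block_unique (h ▸ hc) ha) (Ne.symm (ne_of_lt hst))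
    rw [Equiv.swap_apply_right, Equiv.swap_apply_of_ne_of_ne hcu hcb]
    have hac : π a < π c := hπ s t hst a ha c hc
    by_contra hle
    have : π c ≤ π a := hmax c (mem_ranked_of_mem hc) (lt_of_le_of_ne (not_lt.mp hle)
      (fun h => hcu (π.injective h)))
    exact absurd hac (not_lt.mpr this)
  · rw [Equiv.swap_apply_of_ne_of_ne hau hab]
    by_cases hcb : c = b
    · subst hcb
      rw [Equiv.swap_apply_right]
      exact (hπ s t hst a ha c hc).trans hbu
    · rw [Equiv.swap_apply_of_ne_of_ne hcu hcb]
      exact hπ s t hst a ha c hc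

lemma rk_swap_nxt {U : TIR n} {π : Equiv.Perm (Fin n)} {u b : Fin n}
    (hu : u ∉ U.ranked) (hb : b ∈ U.ranked) (hub : π u < π b)
    (hmin : ∀ c ∈ U.ranked, π u < π c → π b ≤ π c) :
    rk U (π * Equiv.swap u b) u = rk U π u + 1 := by
  have hbu : b ≠ u := fun h => hu (h ▸ hb)
  have hset : U.ranked.filter (fun c => (π * Equiv.swap u b) c < (π * Equiv.swap u b) u)
      = insert b (U.ranked.filter (fun c => π c < π u)) := by
    ext c
    simp only [Finset.mem_filter, Finset.mem_insert, Equiv.Perm.mul_apply,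
      Equiv.swap_apply_left]
    by_cases hcb : c = b
    · subst hcb
      simp [Equiv.swap_apply_right, hub, hb]
    · have hcu : c ≠ u → Equiv.swap u b c = c := fun h =>
        Equiv.swap_apply_of_ne_of_ne h hcb
      constructor
      · rintro ⟨hcr, hlt⟩
        have hcu' : c ≠ u := fun h => hu (h ▸ hcr)
        rw [hcu hcu'] at hlt
        right
        refine ⟨hcr, ?_⟩
        by_contra hge
        have hne : π c ≠ π u := fun h => hcu' (π.injective h)
        have : π u < π c := lt_of_le_of_ne (not_lt.mp hge) hne.symm
        exact absurd hlt (not_lt.mpr (hmin c hcr this))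
      · rintro (rfl | ⟨hcr, hlt⟩)
        · exact absurd rfl hcb
        · have hcu' : c ≠ u := fun h => hu (h ▸ hcr)
          rw [hcu hcu']
          exact ⟨hcr, hlt.trans hub⟩
  unfold rk
  rw [hset, Finset.card_insert_of_notMem (by simp [not_lt.mpr (le_of_lt hub)])]

lemma rk_swap_prv {U : TIR n} {π : Equiv.Perm (Fin n)} {u b : Fin n}
    (hu : u ∉ U.ranked) (hb : b ∈ U.ranked) (hbu : π b < π u)
    (hmax : ∀ c ∈ U.ranked, π c < π u → π c ≤ π b) :
    rk U (π * Equiv.swap u b) u + 1 = rk U π u := by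
  have hset : U.ranked.filter (fun c => (π * Equiv.swap u b) c < (π * Equiv.swap u b) u)
      = (U.ranked.filter (fun c => π c < π u)).erase b := by
    ext c
    simp only [Finset.mem_filter, Finset.mem_erase, Equiv.Perm.mul_apply,
      Equiv.swap_apply_left]
    by_cases hcb : c = b
    · subst hcb
      simp [Equiv.swap_apply_right, not_lt.mpr (le_of_lt hbu)]
    · have hcu : c ≠ u → Equiv.swap u b c = c := fun h =>
        Equiv.swap_apply_of_ne_of_ne h hcb
      constructor
      · rintro ⟨hcr, hlt⟩
        have hcu' : c ≠ u := fun h => hu (h ▸ hcr)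
        rw [hcu hcu'] at hlt
        exact ⟨hcb, hcr, hlt.trans hbu⟩
      · rintro ⟨-, hcr, hlt⟩
        have hcu' : c ≠ u := fun h => hu (h ▸ hcr)
        rw [hcu hcu']
        refine ⟨hcr, ?_⟩
        have := hmax c hcr hlt
        exact lt_of_le_of_ne this (fun h => hcb (π.injective h))
  unfold rk
  rw [hset]
  have hbmem : b ∈ U.ranked.filter (fun c => π c < π u) := by
    simp only [Finset.mem_filter]; exact ⟨hb, hbu⟩
  rw [Finset.card_erase_of_mem hbmem]
  have hpos : 0 < (U.ranked.filter (fun c => π c < π u)).card :=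
    Finset.card_pos.mpr ⟨b, hbmem⟩
  omega

lemma after_nonempty {U : TIR n} {π : Equiv.Perm (Fin n)} {u : Fin n} {q : ℕ}
    (hu : u ∉ U.ranked) (hq : rk U π u = q) (hqk : q + 1 ≤ U.ranked.card) :
    (U.ranked.filter (fun b => π u < π b)).Nonempty := by
  have hsplit : (U.ranked.filter (fun b => π b < π u)).card
      + (U.ranked.filter (fun b => π u < π b)).card = U.ranked.card := by
    rw [show U.ranked.filter (fun b => π u < π b)
        = U.ranked.filter (fun b => ¬ (π b < π u)) by
      apply Finset.filter_congr
      intro b hbr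
      have : π b ≠ π u := fun h => hu ((π.injective h) ▸ hbr)
      constructor
      · exact fun h => not_lt.mpr (le_of_lt h)
      · exact fun h => lt_of_le_of_ne (not_lt.mp h) this.symm]
    exact Finset.card_filter_add_card_filter_not _
  rw [← Finset.card_pos]
  have : rk U π u = (U.ranked.filter (fun b => π b < π u)).card := rfl
  omega

lemma before_nonempty {U : TIR n} {π : Equiv.Perm (Fin n)} {u : Fin n} {q : ℕ}
    (hq : rk U π u = q + 1) :
    (U.ranked.filter (fun b => π b < π u)).Nonempty := by
  rw [← Finset.card_pos]
  have : rk U π u = (U.ranked.filter (fun b => π b < π u)).card := rfl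
  omega

lemma fiber_succ {U : TIR n} {u : Fin n} (hu : u ∉ U.ranked) {q : ℕ}
    (hqk : q + 1 ≤ U.ranked.card) :
    (U.consistent.filter (fun π => rk U π u = q)).card
      = (U.consistent.filter (fun π => rk U π u = q + 1)).card := by
  apply Finset.card_bij'
    (i := fun π _ => π * Equiv.swap u (nxt U π u))
    (j := fun π _ => π * Equiv.swap u (prv U π u))
  -- hi
  · intro π hπ
    simp only [Finset.mem_filter] at hπ
    obtain ⟨hπc, hπq⟩ := hπ
    obtain ⟨h1, h2, h3⟩ := nxt_spec (after_nonempty hu hπq hqk)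
    simp only [Finset.mem_filter]
    exact ⟨consistent_swap_nxt hπc hu h1 h2 h3,
      by rw [rk_swap_nxt hu h1 h2 h3, hπq]⟩
  -- hj
  · intro π hπ
    simp only [Finset.mem_filter] at hπ
    obtain ⟨hπc, hπq⟩ := hπ
    obtain ⟨h1, h2, h3⟩ := prv_spec (before_nonempty hπq)
    simp only [Finset.mem_filter]
    refine ⟨consistent_swap_prv hπc hu h1 h2 h3, ?_⟩
    have := rk_swap_prv hu h1 h2 h3
    omega
  -- left_inv
  · intro π hπ
    simp only [Finset.mem_filter] at hπ
    obtain ⟨hπc, hπq⟩ := hπ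
    obtain ⟨h1, h2, h3⟩ := nxt_spec (after_nonempty hu hπq hqk)
    set b := nxt U π u with hbdef
    set π' := π * Equiv.swap u b with hπ'def
    have hbu : b ≠ u := fun h => hu (h ▸ h1)
    have hπ'u : π' u = π b := by rw [hπ'def]; simp [Equiv.swap_apply_left]
    have hπ'b : π' b = π u := by rw [hπ'def]; simp [Equiv.swap_apply_right]
    have hprv : prv U π' u = b := by
      apply prv_eq h1 (by rw [hπ'u, hπ'b]; exact h2)
      intro c hc hcu
      by_cases hcb : c = b
      · subst hcb; exact le_refl _
      · have hcu' : c ≠ u := fun h => hu (h ▸ hc)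
        have hπ'c : π' c = π c := by
          rw [hπ'def]; simp [Equiv.swap_apply_of_ne_of_ne hcu' hcb]
        rw [hπ'c, hπ'b]
        rw [hπ'c, hπ'u] at hcu
        by_contra hgt
        exact absurd hcu (not_lt.mpr (h3 c hc (not_le.mp hgt)))
    show π' * Equiv.swap u (prv U π' u) = π
    rw [hprv, hπ'def, Equiv.mul_swap_mul_self]
  -- right_inv
  · intro π hπ
    simp only [Finset.mem_filter] at hπ
    obtain ⟨hπc, hπq⟩ := hπ
    obtain ⟨h1, h2, h3⟩ := prv_spec (before_nonempty hπq)
    set b := prv U π u with hbdef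
    set π' := π * Equiv.swap u b with hπ'def
    have hbu : b ≠ u := fun h => hu (h ▸ h1)
    have hπ'u : π' u = π b := by rw [hπ'def]; simp [Equiv.swap_apply_left]
    have hπ'b : π' b = π u := by rw [hπ'def]; simp [Equiv.swap_apply_right]
    have hnxt : nxt U π' u = b := by
      apply nxt_eq h1 (by rw [hπ'u, hπ'b]; exact h2)
      intro c hc hcu
      by_cases hcb : c = b
      · subst hcb; exact le_refl _
      · have hcu' : c ≠ u := fun h => hu (h ▸ hc)
        have hπ'c : π' c = π c := by
          rw [hπ'def]; simp [Equiv.swap_apply_of_ne_of_ne hcu' hcb]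
        rw [hπ'c, hπ'b]
        rw [hπ'c, hπ'u] at hcu
        by_contra hgt
        exact absurd hcu (not_lt.mpr (h3 c hc (not_le.mp hgt)))
    show π' * Equiv.swap u (nxt U π' u) = π
    rw [hnxt, hπ'def, Equiv.mul_swap_mul_self]

end TIRAux

end Aux3
section Aux4

open Finset Equiv

namespace TIRAux

variable {n : ℕ}

lemma fiber_card_eq {U : TIR n} {u : Fin n} (hu : u ∉ U.ranked) {q : ℕ}
    (hq : q ≤ U.ranked.card) :
    (U.consistent.filter (fun π => rk U π u = q)).card
      = (U.consistent.filter (fun π => rk U π u = 0)).card := by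
  induction q with
  | zero => rfl
  | succ m ih =>
    rw [← fiber_succ hu hq]
    exact ih (Nat.le_of_succ_le hq)

lemma card_consistent_eq {U : TIR n} {u : Fin n} (hu : u ∉ U.ranked) :
    U.consistent.card
      = (U.ranked.card + 1) * (U.consistent.filter (fun π => rk U π u = 0)).card := by
  have h1 : U.consistent.card = ∑ q ∈ Finset.range (U.ranked.card + 1),
      (U.consistent.filter (fun π => rk U π u = q)).card := by
    apply Finset.card_eq_sum_card_fiberwise
    intro π _
    rw [Finset.mem_coe, Finset.mem_range]
    exact Nat.lt_succ_of_le (rk_le U π u)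
  rw [h1]
  rw [Finset.sum_congr rfl (fun q hq => fiber_card_eq hu (Nat.lt_succ_iff.mp
    (Finset.mem_range.mp hq)))]
  rw [Finset.sum_const, Finset.card_range, smul_eq_mul]

lemma pair_count_swap {U : TIR n} {u i b : Fin n} {s₀ : Fin U.K}
    (hu : u ∉ U.ranked) (hi : i ∈ U.A s₀) (hb : b ∈ U.A s₀) (q r : ℕ) :
    (U.consistent.filter (fun π => rk U π u = q ∧ rk U π b = r)).card
      = (U.consistent.filter (fun π => rk U π u = q ∧ rk U π i = r)).card := by
  have hswap : ∀ s, ∀ x ∈ U.A s, Equiv.swap i b x ∈ U.A s := swap_block_preserve hi hb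
  have hrked : ∀ c : Fin n, c ∈ U.ranked ↔ Equiv.swap i b c ∈ U.ranked := by
    intro c
    constructor
    · intro hc
      obtain ⟨s, hs⟩ := mem_ranked.mp hc
      exact mem_ranked_of_mem (hswap s c hs)
    · intro hc
      obtain ⟨s, hs⟩ := mem_ranked.mp hc
      have := hswap s _ hs
      rw [Equiv.swap_apply_self] at this
      exact mem_ranked_of_mem this
  have hui : u ≠ i := fun h => hu (h ▸ mem_ranked_of_mem hi)
  have hub : u ≠ b := fun h => hu (h ▸ mem_ranked_of_mem hb)
  apply Finset.card_nbij' (fun π => π * Equiv.swap i b) (fun π => π * Equiv.swap i b)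
  · intro π hπ
    simp only [Finset.mem_coe, Finset.mem_filter] at hπ ⊢
    obtain ⟨hπc, hq, hr⟩ := hπ
    refine ⟨(consistent_mul hswap).mpr hπc, ?_, ?_⟩
    · rw [rk_mul hrked u, Equiv.swap_apply_of_ne_of_ne hui hub]
      exact hq
    · rw [rk_mul hrked i, Equiv.swap_apply_left]
      exact hr
  · intro π hπ
    simp only [Finset.mem_coe, Finset.mem_filter] at hπ ⊢
    obtain ⟨hπc, hq, hr⟩ := hπ
    refine ⟨(consistent_mul hswap).mpr hπc, ?_, ?_⟩
    · rw [rk_mul hrked u, Equiv.swap_apply_of_ne_of_ne hui hub]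
      exact hq
    · rw [rk_mul hrked b, Equiv.swap_apply_right]
      exact hr
  · intro π _; exact Equiv.mul_swap_mul_self i b π
  · intro π _; exact Equiv.mul_swap_mul_self i b π

lemma block_fiber {U : TIR n} {u i : Fin n} {s₀ : Fin U.K}
    (hu : u ∉ U.ranked) (hi : i ∈ U.A s₀) {q r : ℕ}
    (hr : r ∈ Finset.Ico (pre U s₀) (pre U s₀ + (U.A s₀).card)) :
    (U.A s₀).card * (U.consistent.filter (fun π => rk U π u = q ∧ rk U π i = r)).card
      = (U.consistent.filter (fun π => rk U π u = q)).card := by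
  calc (U.A s₀).card * (U.consistent.filter (fun π => rk U π u = q ∧ rk U π i = r)).card
      = ∑ b ∈ U.A s₀,
          (U.consistent.filter (fun π => rk U π u = q ∧ rk U π b = r)).card := by
        rw [Finset.sum_congr rfl (fun b hb => pair_count_swap hu hi hb q r),
          Finset.sum_const, smul_eq_mul]
    _ = ∑ b ∈ U.A s₀, ((U.consistent.filter (fun π => rk U π u = q)).filter
          (fun π => rk U π b = r)).card := by
        apply Finset.sum_congr rfl
        intro b _
        rw [Finset.filter_filter]
    _ = ∑ π ∈ U.consistent.filter (fun π => rk U π u = q),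
          ((U.A s₀).filter (fun b => rk U π b = r)).card := by
        simp_rw [Finset.card_filter]
        exact Finset.sum_comm
    _ = (U.consistent.filter (fun π => rk U π u = q)).card := by
        rw [Finset.card_eq_sum_ones (U.consistent.filter (fun π => rk U π u = q))]
        apply Finset.sum_congr rfl
        intro π hπ
        exact block_filter_rk_card (Finset.mem_filter.mp hπ).1 hr

lemma gauss_sum (p φ : ℕ) (hφ : 0 < φ) :
    2 * (∑ r ∈ Finset.Ico p (p + φ), (r + 1)) = φ * (2 * p + φ + 1) := by
  obtain ⟨ψ, rfl⟩ : ∃ ψ, φ = ψ + 1 := ⟨φ - 1, by omega⟩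
  rw [Finset.sum_Ico_eq_sum_range]
  have hsub : p + (ψ + 1) - p = ψ + 1 := by omega
  rw [hsub]
  have hre : ∀ j ∈ Finset.range (ψ + 1), p + j + 1 = (p + 1) + j := by
    intro j _; omega
  rw [Finset.sum_congr rfl hre, Finset.sum_add_distrib, Finset.sum_const,
    Finset.card_range, smul_eq_mul]
  have hSj := Finset.sum_range_id_mul_two (ψ + 1)
  calc 2 * ((ψ + 1) * (p + 1) + ∑ j ∈ Finset.range (ψ + 1), j)
      = 2 * ((ψ + 1) * (p + 1)) + (∑ j ∈ Finset.range (ψ + 1), j) * 2 := by ring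
    _ = 2 * ((ψ + 1) * (p + 1)) + (ψ + 1) * ψ := by rw [hSj]; simp
    _ = (ψ + 1) * (2 * p + (ψ + 1) + 1) := by ring

lemma count_u_lt_i {U : TIR n} {u i : Fin n} (hu : u ∉ U.ranked) {s₀ : Fin U.K}
    (hi : i ∈ U.A s₀) :
    ((U.consistent.filter (fun π => π u < π i)).card : ℚ)
      = ((U.tau i : ℚ) + ((U.phi i : ℚ) - 1) / 2) / ((U.ranked.card : ℚ) + 1)
        * U.consistent.card := by
  classical
  set k := U.ranked.card with hk
  set p := pre U s₀ with hp
  set φ := (U.A s₀).card with hφdef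
  set d := (U.consistent.filter (fun π => rk U π u = 0)).card with hd
  set C := (U.consistent.filter (fun π => π u < π i)).card with hCdef
  have hiR : i ∈ U.ranked := mem_ranked_of_mem hi
  have hφpos : 0 < φ := (U.nonempty s₀).card_pos
  have hrange_le : p + φ ≤ k := pre_add_card_le s₀
  -- partition the count by the rank of i
  have hC1 : C = ∑ r ∈ Finset.Ico p (p + φ),
      ((U.consistent.filter (fun π => π u < π i)).filter (fun π => rk U π i = r)).card := by
    apply Finset.card_eq_sum_card_fiberwise
    intro π hπ
    exact rk_mem_Ico (Finset.mem_filter.mp hπ).1 hi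
  have hC2 : ∀ r : ℕ,
      ((U.consistent.filter (fun π => π u < π i)).filter (fun π => rk U π i = r)).card
        = (U.consistent.filter (fun π => rk U π u ≤ r ∧ rk U π i = r)).card := by
    intro r
    rw [Finset.filter_filter]
    congr 1
    apply Finset.filter_congr
    intro π _
    constructor
    · rintro ⟨h1, h2⟩
      exact ⟨le_of_le_of_eq ((lt_iff_rk_le hu hiR).mp h1) h2, h2⟩
    · rintro ⟨h1, h2⟩
      exact ⟨(lt_iff_rk_le hu hiR).mpr (le_of_le_of_eq h1 h2.symm), h2⟩
  have hC3 : ∀ r : ℕ, (U.consistent.filter (fun π => rk U π u ≤ r ∧ rk U π i = r)).card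
      = ∑ q ∈ Finset.range (r + 1),
        (U.consistent.filter (fun π => rk U π u = q ∧ rk U π i = r)).card := by
    intro r
    have hmaps : ∀ π ∈ U.consistent.filter (fun π => rk U π u ≤ r ∧ rk U π i = r),
        rk U π u ∈ Finset.range (r + 1) := by
      intro π hπ
      rw [Finset.mem_range]
      exact Nat.lt_succ_of_le (Finset.mem_filter.mp hπ).2.1
    rw [Finset.card_eq_sum_card_fiberwise hmaps]
    apply Finset.sum_congr rfl
    intro q hq
    have hqr : q ≤ r := Nat.lt_succ_iff.mp (Finset.mem_range.mp hq)
    rw [Finset.filter_filter]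
    congr 1
    apply Finset.filter_congr
    intro π _
    constructor
    · rintro ⟨⟨_, h2⟩, h3⟩
      exact ⟨h3, h2⟩
    · rintro ⟨h1, h2⟩
      exact ⟨⟨h1 ▸ hqr, h2⟩, h1⟩
  -- multiply by φ
  have hφC : φ * C = (∑ r ∈ Finset.Ico p (p + φ), (r + 1)) * d := by
    have hterm : ∀ r ∈ Finset.Ico p (p + φ),
        φ * ((U.consistent.filter (fun π => π u < π i)).filter
          (fun π => rk U π i = r)).card = (r + 1) * d := by
      intro r hr
      rw [hC2 r, hC3 r, Finset.mul_sum]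
      have hterm2 : ∀ q ∈ Finset.range (r + 1),
          φ * (U.consistent.filter (fun π => rk U π u = q ∧ rk U π i = r)).card = d := by
        intro q hq
        rw [block_fiber hu hi hr]
        apply fiber_card_eq hu
        have h1 : q ≤ r := Nat.lt_succ_iff.mp (Finset.mem_range.mp hq)
        have h2 : r < p + φ := (Finset.mem_Ico.mp hr).2
        omega
      rw [Finset.sum_congr rfl hterm2, Finset.sum_const, Finset.card_range, smul_eq_mul]
    rw [hC1, Finset.mul_sum, Finset.sum_congr rfl hterm, ← Finset.sum_mul]
  have hM := gauss_sum p φ hφpos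
  have hS : U.consistent.card = (k + 1) * d := card_consistent_eq hu
  have key : 2 * ((k + 1) * (φ * C)) = (φ * (2 * p + φ + 1)) * ((k + 1) * d) := by
    calc 2 * ((k + 1) * (φ * C))
        = 2 * ((k + 1) * ((∑ r ∈ Finset.Ico p (p + φ), (r + 1)) * d)) := by rw [hφC]
      _ = (2 * (∑ r ∈ Finset.Ico p (p + φ), (r + 1))) * ((k + 1) * d) := by ring
      _ = (φ * (2 * p + φ + 1)) * ((k + 1) * d) := by rw [hM]
  rw [tau_eq hi, phi_eq hi, hS]
  have keyQ : 2 * (((k : ℚ) + 1) * ((φ : ℚ) * (C : ℚ)))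
      = ((φ : ℚ) * (2 * (p : ℚ) + (φ : ℚ) + 1)) * (((k : ℚ) + 1) * (d : ℚ)) := by
    exact_mod_cast key
  have hφne : (φ : ℚ) ≠ 0 := by exact_mod_cast hφpos.ne'
  have hkne : ((k : ℚ) + 1) ≠ 0 := by positivity
  have keyQ' : 2 * ((((k : ℚ)) + 1) * (C : ℚ))
      = (2 * (p : ℚ) + (φ : ℚ) + 1) * (((k : ℚ) + 1) * (d : ℚ)) := by
    apply mul_left_cancel₀ hφne
    linear_combination keyQ
  push_cast
  field_simp
  apply mul_left_cancel₀ hkne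
  linear_combination keyQ'

end TIRAux

end Aux4
section Aux5

open Finset Equiv

namespace TIRAux

variable {n : ℕ}

lemma count_lt (U : TIR n) {i j : Fin n} (hij : i ≠ j) :
    ((U.consistent.filter (fun π => π i < π j)).card : ℚ)
      = U.pij i j * U.consistent.card := by
  classical
  by_cases hi : i ∈ U.ranked
  · by_cases hj : j ∈ U.ranked
    · obtain ⟨s₀, hs₀⟩ := mem_ranked.mp hi
      obtain ⟨t₀, ht₀⟩ := mem_ranked.mp hj
      rcases lt_trichotomy s₀ t₀ with hlt | heq | hgt
      · have htau : U.tau i < U.tau j := tau_lt hs₀ ht₀ hlt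
        have hfull : U.consistent.filter (fun π => π i < π j) = U.consistent := by
          apply Finset.filter_true_of_mem
          intro π hπ
          exact (mem_consistent.mp hπ) s₀ t₀ hlt i hs₀ j ht₀
        rw [hfull, TIR.pij, if_pos hi, if_pos hj, if_neg (Nat.ne_of_lt htau),
          if_pos htau, one_mul]
      · subst heq
        have htau : U.tau i = U.tau j := by rw [tau_eq hs₀, tau_eq ht₀]
        have h1 := count_add (U := U) hij
        have h2 := count_half (U := U) (swap_block_preserve hs₀ ht₀)
        rw [TIR.pij, if_pos hi, if_pos hj, if_pos htau]
        have h3 : ((U.consistent.filter (fun π => π i < π j)).card : ℚ) * 2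
            = (U.consistent.card : ℚ) := by
          exact_mod_cast (by omega : (U.consistent.filter (fun π => π i < π j)).card * 2
            = U.consistent.card)
        linarith
      · have htau : U.tau j < U.tau i := tau_lt ht₀ hs₀ hgt
        have hempty : U.consistent.filter (fun π => π i < π j) = ∅ := by
          apply Finset.filter_false_of_mem
          intro π hπ
          exact not_lt.mpr (le_of_lt ((mem_consistent.mp hπ) t₀ s₀ hgt j ht₀ i hs₀))
        rw [hempty, TIR.pij, if_pos hi, if_pos hj, if_neg (Nat.ne_of_gt htau),
          if_neg (not_lt.mpr (le_of_lt htau))]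
        simp
    · obtain ⟨s₀, hs₀⟩ := mem_ranked.mp hi
      have h1 := count_add (U := U) hij
      have h2 := count_u_lt_i (U := U) hj hs₀
      rw [TIR.pij, if_pos hi, if_neg hj]
      have h1Q : ((U.consistent.filter (fun π => π i < π j)).card : ℚ)
          + ((U.consistent.filter (fun π => π j < π i)).card : ℚ)
          = (U.consistent.card : ℚ) := by exact_mod_cast h1
      rw [sub_mul, one_mul]
      linarith
  · by_cases hj : j ∈ U.ranked
    · obtain ⟨t₀, ht₀⟩ := mem_ranked.mp hj
      have h2 := count_u_lt_i (U := U) hi ht₀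
      rw [TIR.pij, if_neg hi, if_pos hj]
      exact h2
    · have h1 := count_add (U := U) hij
      have h2 := count_half (U := U) (swap_unranked_preserve hi hj)
      rw [TIR.pij, if_neg hi, if_neg hj]
      have h3 : ((U.consistent.filter (fun π => π i < π j)).card : ℚ) * 2
          = (U.consistent.card : ℚ) := by
        exact_mod_cast (by omega : (U.consistent.filter (fun π => π i < π j)).card * 2
          = U.consistent.card)
      linarith

lemma card_pairs (n : ℕ) :
    2 * (Finset.univ.filter (fun p : Fin n × Fin n => p.1 < p.2)).card + n = n * n := by
  classical
  have hdiag : (Finset.univ.filter (fun p : Fin n × Fin n => p.1 = p.2)).card = n := by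
    rw [Finset.card_filter, Fintype.sum_prod_type]
    simp
  have hswapcnt : (Finset.univ.filter (fun p : Fin n × Fin n => p.1 < p.2)).card
      = (Finset.univ.filter (fun p : Fin n × Fin n => p.2 < p.1)).card := by
    apply Finset.card_nbij' Prod.swap Prod.swap
    · intro p hp; simp only [Finset.mem_coe, Finset.mem_filter, Finset.mem_univ, true_and] at hp ⊢
      exact hp
    · intro p hp; simp only [Finset.mem_coe, Finset.mem_filter, Finset.mem_univ, true_and] at hp ⊢
      exact hp
    · intro p _; rfl
    · intro p _; rfl
  have hsplit : ∀ p : Fin n × Fin n,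
      (if p.1 < p.2 then (1:ℕ) else 0) + ((if p.2 < p.1 then (1:ℕ) else 0)
        + (if p.1 = p.2 then (1:ℕ) else 0)) = 1 := by
    intro p
    rcases lt_trichotomy p.1 p.2 with h | h | h
    · rw [if_pos h, if_neg (asymm h), if_neg (ne_of_lt h)]
    · rw [if_pos h, if_neg (by rw [h]; exact lt_irrefl _), if_neg (by rw [h]; exact lt_irrefl _)]
    · rw [if_pos h, if_neg (asymm h), if_neg (ne_of_gt h)]
  have htot : ∑ p : Fin n × Fin n, ((if p.1 < p.2 then (1:ℕ) else 0)
      + ((if p.2 < p.1 then (1:ℕ) else 0) + (if p.1 = p.2 then (1:ℕ) else 0))) = n * n := by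
    rw [Finset.sum_congr rfl (fun p _ => hsplit p)]
    simp [Fintype.card_prod]
  rw [Finset.sum_add_distrib, Finset.sum_add_distrib, ← Finset.card_filter,
    ← Finset.card_filter, ← Finset.card_filter] at htot
  omega

end TIRAux

end Aux5
open TIRAux

/-- Proposition 3: for tied incomplete rankings `U, V` with consistent sets
`S = S_U`, `R = S_V`, the average Kendall tau distance satisfies
`(1/(|S||R|)) Σ_{π∈S} Σ_{σ∈R} T(π,σ)
  = n(n−1)/4 − (1/2) Σ_{i<j} (1 − 2p_{ij}(U))(1 − 2p_{ij}(V))`. -/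
theorem average_kendall_tied_incomplete (n : ℕ) (U V : TIR n) :
    (1 / ((U.consistent.card : ℚ) * (V.consistent.card : ℚ))) *
        ∑ π ∈ U.consistent, ∑ σ ∈ V.consistent, (kendall π σ : ℚ)
      = (n : ℚ) * ((n : ℚ) - 1) / 4
        - (1 / 2) * ∑ p ∈ Finset.univ.filter (fun p : Fin n × Fin n => p.1 < p.2),
            (1 - 2 * U.pij p.1 p.2) * (1 - 2 * V.pij p.1 p.2) := by
  classical
  set P := Finset.univ.filter (fun p : Fin n × Fin n => p.1 < p.2) with hP
  have hSpos : (0:ℚ) < (U.consistent.card : ℚ) := by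
    exact_mod_cast Finset.card_pos.mpr (consistent_nonempty U)
  have hRpos : (0:ℚ) < (V.consistent.card : ℚ) := by
    exact_mod_cast Finset.card_pos.mpr (consistent_nonempty V)
  have hSne : (U.consistent.card : ℚ) ≠ 0 := ne_of_gt hSpos
  have hRne : (V.consistent.card : ℚ) ≠ 0 := ne_of_gt hRpos
  -- Step A: kendall as a sum over pairs
  have hk : ∀ π σ : Equiv.Perm (Fin n), (kendall π σ : ℚ)
      = ∑ p ∈ P, (if ((π p.1 < π p.2) ↔ ¬ (σ p.1 < σ p.2)) then (1:ℚ) else 0) := by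
    intro π σ
    rw [kendall, show Finset.univ.filter (fun p : Fin n × Fin n =>
        p.1 < p.2 ∧ ((π p.1 < π p.2) ↔ ¬ (σ p.1 < σ p.2)))
      = P.filter (fun p => ((π p.1 < π p.2) ↔ ¬ (σ p.1 < σ p.2))) from by
        rw [hP, Finset.filter_filter], Finset.card_filter]
    push_cast
    rfl
  -- Step B: exchange sums
  have hsum : ∑ π ∈ U.consistent, ∑ σ ∈ V.consistent, (kendall π σ : ℚ)
      = ∑ p ∈ P, ∑ π ∈ U.consistent, ∑ σ ∈ V.consistent,
          (if ((π p.1 < π p.2) ↔ ¬ (σ p.1 < σ p.2)) then (1:ℚ) else 0) := by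
    simp_rw [hk]
    rw [show ∑ π ∈ U.consistent, ∑ σ ∈ V.consistent, ∑ p ∈ P,
        (if ((π p.1 < π p.2) ↔ ¬ (σ p.1 < σ p.2)) then (1:ℚ) else 0)
      = ∑ π ∈ U.consistent, ∑ p ∈ P, ∑ σ ∈ V.consistent,
        (if ((π p.1 < π p.2) ↔ ¬ (σ p.1 < σ p.2)) then (1:ℚ) else 0) from
      Finset.sum_congr rfl (fun π _ => Finset.sum_comm)]
    exact Finset.sum_comm
  -- Step C: per-pair value
  have hpair : ∀ p ∈ P, ∑ π ∈ U.consistent, ∑ σ ∈ V.consistent,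
      (if ((π p.1 < π p.2) ↔ ¬ (σ p.1 < σ p.2)) then (1:ℚ) else 0)
      = (U.pij p.1 p.2 * (1 - V.pij p.1 p.2) + (1 - U.pij p.1 p.2) * V.pij p.1 p.2)
        * ((U.consistent.card : ℚ) * (V.consistent.card : ℚ)) := by
    intro p hp
    have hij : p.1 ≠ p.2 := ne_of_lt (Finset.mem_filter.mp hp).2
    have hdec : ∀ π σ : Equiv.Perm (Fin n),
        (if ((π p.1 < π p.2) ↔ ¬ (σ p.1 < σ p.2)) then (1:ℚ) else 0)
          = (if π p.1 < π p.2 then (1:ℚ) else 0) * (if σ p.1 < σ p.2 then (0:ℚ) else 1)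
            + (if π p.1 < π p.2 then (0:ℚ) else 1) * (if σ p.1 < σ p.2 then (1:ℚ) else 0) := by
      intro π σ
      by_cases h1 : π p.1 < π p.2 <;> by_cases h2 : σ p.1 < σ p.2 <;> simp [h1, h2]
    have hA : ∑ π ∈ U.consistent, (if π p.1 < π p.2 then (1:ℚ) else 0)
        = U.pij p.1 p.2 * (U.consistent.card : ℚ) := by
      rw [Finset.sum_boole]
      exact count_lt U hij
    have hA' : ∑ π ∈ U.consistent, (if π p.1 < π p.2 then (0:ℚ) else 1)
        = (1 - U.pij p.1 p.2) * (U.consistent.card : ℚ) := by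
      have : ∀ π : Equiv.Perm (Fin n), (if π p.1 < π p.2 then (0:ℚ) else 1)
          = 1 - (if π p.1 < π p.2 then (1:ℚ) else 0) := by
        intro π; by_cases h : π p.1 < π p.2 <;> simp [h]
      rw [Finset.sum_congr rfl (fun π _ => this π), Finset.sum_sub_distrib,
        Finset.sum_const, hA, nsmul_eq_mul, mul_one]
      ring
    have hB : ∑ σ ∈ V.consistent, (if σ p.1 < σ p.2 then (1:ℚ) else 0)
        = V.pij p.1 p.2 * (V.consistent.card : ℚ) := by
      rw [Finset.sum_boole]
      exact count_lt V hij
    have hB' : ∑ σ ∈ V.consistent, (if σ p.1 < σ p.2 then (0:ℚ) else 1)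
        = (1 - V.pij p.1 p.2) * (V.consistent.card : ℚ) := by
      have : ∀ σ : Equiv.Perm (Fin n), (if σ p.1 < σ p.2 then (0:ℚ) else 1)
          = 1 - (if σ p.1 < σ p.2 then (1:ℚ) else 0) := by
        intro σ; by_cases h : σ p.1 < σ p.2 <;> simp [h]
      rw [Finset.sum_congr rfl (fun σ _ => this σ), Finset.sum_sub_distrib,
        Finset.sum_const, hB, nsmul_eq_mul, mul_one]
      ring
    calc ∑ π ∈ U.consistent, ∑ σ ∈ V.consistent,
        (if ((π p.1 < π p.2) ↔ ¬ (σ p.1 < σ p.2)) then (1:ℚ) else 0)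
        = ∑ π ∈ U.consistent,
            ((if π p.1 < π p.2 then (1:ℚ) else 0)
                * ((1 - V.pij p.1 p.2) * (V.consistent.card : ℚ))
              + (if π p.1 < π p.2 then (0:ℚ) else 1)
                * (V.pij p.1 p.2 * (V.consistent.card : ℚ))) := by
          apply Finset.sum_congr rfl
          intro π _
          rw [Finset.sum_congr rfl (fun σ _ => hdec π σ), Finset.sum_add_distrib,
            ← Finset.mul_sum, ← Finset.mul_sum, hB, hB']
      _ = (∑ π ∈ U.consistent, (if π p.1 < π p.2 then (1:ℚ) else 0))
              * ((1 - V.pij p.1 p.2) * (V.consistent.card : ℚ))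
            + (∑ π ∈ U.consistent, (if π p.1 < π p.2 then (0:ℚ) else 1))
              * (V.pij p.1 p.2 * (V.consistent.card : ℚ)) := by
          rw [Finset.sum_add_distrib, ← Finset.sum_mul, ← Finset.sum_mul]
      _ = (U.pij p.1 p.2 * (1 - V.pij p.1 p.2) + (1 - U.pij p.1 p.2) * V.pij p.1 p.2)
            * ((U.consistent.card : ℚ) * (V.consistent.card : ℚ)) := by
          rw [hA, hA']
          ring
  -- assemble
  rw [hsum, Finset.sum_congr rfl hpair, Finset.mul_sum]
  have hterm : ∀ p ∈ P,
      1 / ((U.consistent.card : ℚ) * (V.consistent.card : ℚ))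
        * ((U.pij p.1 p.2 * (1 - V.pij p.1 p.2) + (1 - U.pij p.1 p.2) * V.pij p.1 p.2)
          * ((U.consistent.card : ℚ) * (V.consistent.card : ℚ)))
      = 1 / 2 - (1 / 2) * ((1 - 2 * U.pij p.1 p.2) * (1 - 2 * V.pij p.1 p.2)) := by
    intro p _
    rw [one_div, inv_mul_eq_div, mul_div_assoc,
      div_self (mul_ne_zero hSne hRne)]
    ring
  rw [Finset.sum_congr rfl hterm, Finset.sum_sub_distrib, Finset.sum_const]
  have hcardP : 2 * (P.card : ℚ) + (n : ℚ) = (n : ℚ) * (n : ℚ) := by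
    exact_mod_cast card_pairs n
  rw [nsmul_eq_mul]
  have hhalf : ((P.card : ℚ)) * (1/2) = (n : ℚ) * ((n : ℚ) - 1) / 4 := by
    linear_combination (1/4 : ℚ) * hcardP
  rw [hhalf, Finset.mul_sum]
end
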